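/- arXiv:1210.4046 — 3 statements merged into one kernel-verified Lean document; each statement's English description precedes it below -/
import Mathlib

section
/- Let $n,N,k$ be positive integers with $N-n \le n-1$. Let $A^a_{\alpha\beta}, B^a_{\alpha\beta}$ ($1\le\alpha,\beta\le n$, $n+1\le a\le N$) be complex numbers, let $(G_{a\bar b})$ be a Hermitian matrix, and let $(g_{\alpha\bar\beta})$ be a positive definite Hermitian matrix. Let $(H^{(l)}_{\alpha\bar\beta}), (\hat H^{(l)}_{\alpha\bar\beta}), (H^{*(l)}_{\alpha\bar\beta}), (\tilde H^{(l)}_{\alpha\bar\beta})$, $1\le l\le k$, be Hermitian matrices. Suppose that for all $X\in\mathbb{C}^n$, $\sum_{a,b=n+1}^N G_{a\bar b} A^a_{\alpha\beta}X^\alpha X^\beta \overline{B^b_{\mu\nu}X^\mu X^\nu} = \sum_{l=1}^k (H^{(l)}_{\alpha\bar\beta}g_{\mu\bar\nu} + \hat H^{(l)}_{\mu\bar\beta}g_{\alpha\bar\nu} + H^{*(l)}_{\alpha\bar\nu}g_{\mu\bar\beta} + \tilde H^{(l)}_{\mu\bar\nu}g_{\alpha\bar\beta})X^\alpha\bar X^\beta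 X^\mu\bar X^\nu$ (summation over repeated Greek indices). Then $\sum_{a,b=n+1}^N G_{a\bar b} A^a_{\alpha\beta}X^\alpha X^\beta \overline{B^b_{\mu\nu}X^\mu X^\nu} = 0$ for all $X\in\mathbb{C}^n$. -/
open Complex Finset

namespace HuangRigidity

noncomputable section

/-! ### Scalar coefficient-extraction lemmas -/

lemma coeff10 (c00 c10 c01 c11 : ℂ)
    (h : ∀ t : ℂ, c00 + c10 * t + c01 * (starRingEnd ℂ) t + c11 * (t * (starRingEnd ℂ) t) = 0) :
    c10 = 0 := by
  have h1 := h 1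
  have h2 := h (-1)
  have h3 := h I
  have h4 := h (-I)
  simp only [map_one, map_neg, Complex.conj_I, mul_one, mul_neg, neg_neg, one_mul,
    neg_mul] at h1 h2 h3 h4
  linear_combination (1/4 : ℂ) * h1 - (1/4 : ℂ) * h2 - (I/4) * h3 + (I/4) * h4 +
    (c10/2 - c01/2) * Complex.I_sq

lemma coeff11 (c00 c10 c01 c11 c20 c02 c21 c12 c22 : ℂ)
    (h : ∀ t : ℂ, c00 + c10 * t + c01 * (starRingEnd ℂ) t + c11 * (t * (starRingEnd ℂ) t)
      + c20 * t ^ 2 + c02 * ((starRingEnd ℂ) t) ^ 2 + c21 * (t ^ 2 * (starRingEnd ℂ) t)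
      + c12 * (t * ((starRingEnd ℂ) t) ^ 2) + c22 * (t ^ 2 * ((starRingEnd ℂ) t) ^ 2) = 0) :
    c11 = 0 := by
  have b2 : ∀ t : ℂ, c20 * t ^ 2 + c11 * (t * (starRingEnd ℂ) t)
      + c02 * ((starRingEnd ℂ) t) ^ 2 = 0 := by
    intro t
    have h0 := h 0
    have h1 := h t
    have h2 := h (2 * t)
    have h3 := h (3 * t)
    have h4 := h (4 * t)
    simp only [map_mul, map_ofNat, map_zero, mul_zero, zero_mul, add_zero, zero_add,
      ne_eq, OfNat.ofNat_ne_zero, not_false_eq_true, zero_pow, mul_pow] at h0 h1 h2 h3 h4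
    linear_combination (35/24 : ℂ) * h0 - (13/3 : ℂ) * h1 + (19/4 : ℂ) * h2
      - (7/3 : ℂ) * h3 + (11/24 : ℂ) * h4
  have e1 := b2 1
  have e2 := b2 I
  simp only [map_one, Complex.conj_I, one_pow, mul_one, one_mul] at e1 e2
  linear_combination (1/2 : ℂ) * e1 + (1/2 : ℂ) * e2
    + (-(c20 - c11 + c02)/2) * Complex.I_sq

/-! ### Vectors, bilinear pairings and linear forms -/

variable {n m k : ℕ}

def conjVec (X : Fin n → ℂ) : Fin n → ℂ := fun i => (starRingEnd ℂ) (X i)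

lemma conjVec_add_smul (P Q : Fin n → ℂ) (t : ℂ) :
    conjVec (P + t • Q) = conjVec P + (starRingEnd ℂ) t • conjVec Q := by
  funext i; simp [conjVec, map_add, map_mul]

lemma conjVec_conjVec (X : Fin n → ℂ) : conjVec (conjVec X) = X := by
  funext i; simp [conjVec]

def bil (M : Fin n → Fin n → ℂ) (X Y : Fin n → ℂ) : ℂ := ∑ α, ∑ β, M α β * X α * Y β

lemma bil_add_left (M : Fin n → Fin n → ℂ) (X X' Y : Fin n → ℂ) :
    bil M (X + X') Y = bil M X Y + bil M X' Y := by
  simp only [bil, Pi.add_apply, mul_add, add_mul, Finset.sum_add_distrib]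

lemma bil_add_right (M : Fin n → Fin n → ℂ) (X Y Y' : Fin n → ℂ) :
    bil M X (Y + Y') = bil M X Y + bil M X Y' := by
  simp only [bil, Pi.add_apply, mul_add, add_mul, Finset.sum_add_distrib]

lemma bil_smul_left (M : Fin n → Fin n → ℂ) (t : ℂ) (X Y : Fin n → ℂ) :
    bil M (t • X) Y = t * bil M X Y := by
  simp only [bil, Pi.smul_apply, smul_eq_mul, Finset.mul_sum]
  exact Finset.sum_congr rfl fun α _ => Finset.sum_congr rfl fun β _ => by ring

lemma bil_smul_right (M : Fin n → Fin n → ℂ) (t : ℂ) (X Y : Fin n → ℂ) :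
    bil M X (t • Y) = t * bil M X Y := by
  simp only [bil, Pi.smul_apply, smul_eq_mul, Finset.mul_sum]
  exact Finset.sum_congr rfl fun α _ => Finset.sum_congr rfl fun β _ => by ring

def ebasis (j : Fin n) : Fin n → ℂ := Pi.single j 1

def form (v X : Fin n → ℂ) : ℂ := ∑ i, v i * X i

lemma form_single (v : Fin n → ℂ) (j : Fin n) : form v (ebasis j) = v j := by
  simp [form, ebasis, Pi.single_apply, mul_ite]

lemma form_add (v X Y : Fin n → ℂ) : form v (X + Y) = form v X + form v Y := by
  simp [form, mul_add, Finset.sum_add_distrib]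

lemma form_smul (v : Fin n → ℂ) (s : ℂ) (X : Fin n → ℂ) :
    form v (s • X) = s * form v X := by
  simp only [form, Pi.smul_apply, smul_eq_mul, Finset.mul_sum]
  exact Finset.sum_congr rfl fun i _ => by ring

lemma form_smul_vec (v : Fin n → ℂ) (s : ℂ) (X : Fin n → ℂ) :
    form (s • v) X = s * form v X := by
  simp only [form, Pi.smul_apply, smul_eq_mul, Finset.mul_sum]
  exact Finset.sum_congr rfl fun i _ => by ring

/-! ### Zero products of linear forms -/

lemma two_factor (p q r w : ℂ) (hp : p ≠ 0)
    (h : ∀ s : ℂ, (p + s * q) * (r + s * w) = 0) : r = 0 ∧ w = 0 := by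
  have hr : r = 0 := by
    have h0 := h 0
    simp only [zero_mul, add_zero] at h0
    exact (mul_eq_zero.mp h0).resolve_left hp
  refine ⟨hr, ?_⟩
  by_cases hpq : p + q = 0
  · have h2 := h 2
    have hne : p + 2 * q ≠ 0 := by
      intro hz
      exact hp (by linear_combination 2 * hpq - hz)
    have := (mul_eq_zero.mp h2).resolve_left hne
    rw [hr] at this
    linear_combination this / 2
  · have h1 := h 1
    rw [one_mul, one_mul] at h1
    have := (mul_eq_zero.mp h1).resolve_left hpq
    rw [hr] at this
    linear_combination this

lemma prod_forms_zero (a b : Fin n → ℂ)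
    (h : ∀ X, form a X * form b X = 0) : a = 0 ∨ b = 0 := by
  by_cases ha : a = 0
  · exact Or.inl ha
  · right
    obtain ⟨i, hi⟩ := Function.ne_iff.mp ha
    simp only [Pi.zero_apply] at hi
    funext j
    by_cases hij : i = j
    · subst hij
      have := h (ebasis i)
      rw [form_single, form_single] at this
      exact (mul_eq_zero.mp this).resolve_left hi
    · have key : ∀ s : ℂ, (a i + s * a j) * (b i + s * b j) = 0 := by
        intro s
        have := h (ebasis i + s • ebasis j)
        rw [form_add, form_add, form_smul, form_smul, form_single, form_single,
          form_single, form_single] at this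
        exact this
      exact ((two_factor _ _ _ _ hi key).2 : b j = 0)

lemma vanish_on_ker (a c : Fin n → ℂ) (i0 : Fin n) (hc0 : c i0 ≠ 0)
    (h : ∀ X, form c X = 0 → form a X = 0) :
    ∃ lam : ℂ, a = lam • c := by
  set X0 : Fin n → ℂ := (c i0)⁻¹ • ebasis i0 with hX0
  have hcX0 : form c X0 = 1 := by
    rw [hX0, form_smul, form_single]
    field_simp
  refine ⟨form a X0, ?_⟩
  funext j
  have hker : form c (ebasis j + (-(c j)) • X0) = 0 := by
    rw [form_add, form_smul, form_single, hcX0]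
    ring
  have := h _ hker
  rw [form_add, form_smul, form_single] at this
  simp only [Pi.smul_apply, smul_eq_mul]
  linear_combination this

lemma ker_mult (a b c : Fin n → ℂ) (hc : c ≠ 0)
    (h : ∀ X, form c X = 0 → form a X * form b X = 0) :
    (∃ lam : ℂ, a = lam • c) ∨ (∃ lam : ℂ, b = lam • c) := by
  obtain ⟨i0, hc0⟩ := Function.ne_iff.mp hc
  simp only [Pi.zero_apply] at hc0
  have main : (∀ X, form c X = 0 → form a X = 0) ∨ (∀ X, form c X = 0 → form b X = 0) := by
    by_contra hcon
    push_neg at hcon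
    obtain ⟨⟨P, hcP, haP⟩, ⟨Q, hcQ, hbQ⟩⟩ := hcon
    have key : ∀ s : ℂ, (form a P + s * form a Q) * (form b P + s * form b Q) = 0 := by
      intro s
      have hker : form c (P + s • Q) = 0 := by
        rw [form_add, form_smul, hcP, hcQ]; ring
      have := h _ hker
      rw [form_add, form_smul, form_add, form_smul] at this
      exact this
    exact hbQ (two_factor _ _ _ _ haP key).2
  rcases main with hm | hm
  · exact Or.inl (vanish_on_ker a c i0 hc0 hm)
  · exact Or.inr (vanish_on_ker b c i0 hc0 hm)

/-! ### Sum shuffling -/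

lemma swap3 (f : Fin n → Fin n → Fin n → ℂ) :
    (∑ a, ∑ b, ∑ c, f a b c) = ∑ c, ∑ b, ∑ a, f a b c :=
  calc (∑ a, ∑ b, ∑ c, f a b c) = ∑ b, ∑ a, ∑ c, f a b c := Finset.sum_comm
    _ = ∑ b, ∑ c, ∑ a, f a b c := Finset.sum_congr rfl (fun _ _ => Finset.sum_comm)
    _ = ∑ c, ∑ b, ∑ a, f a b c := Finset.sum_comm

lemma swap13 (f : Fin n → Fin n → Fin n → Fin n → ℂ) :
    (∑ α, ∑ β, ∑ μ, ∑ ν, f α β μ ν) = ∑ α, ∑ β, ∑ μ, ∑ ν, f μ β α ν :=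
  swap3 (fun a b c => ∑ ν, f a b c ν)

lemma swap24 (f : Fin n → Fin n → Fin n → Fin n → ℂ) :
    (∑ α, ∑ β, ∑ μ, ∑ ν, f α β μ ν) = ∑ α, ∑ β, ∑ μ, ∑ ν, f α ν μ β :=
  Finset.sum_congr rfl (fun α _ => swap3 (fun b c d => f α b c d))

lemma bil_mul_expand (M N : Fin n → Fin n → ℂ) (X Y : Fin n → ℂ) :
    bil M X Y * bil N X Y
      = ∑ α, ∑ β, ∑ μ, ∑ ν, (M α β * X α * Y β) * (N μ ν * X μ * Y ν) := by
  simp only [bil, Finset.sum_mul, Finset.mul_sum]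
  rw [swap13 (fun a b c d => M c d * X c * Y d * (N a b * X a * Y b)),
    swap24 (fun a b c d => M a d * X a * Y d * (N c b * X c * Y b))]

lemma pm1 (M N : Fin n → Fin n → ℂ) (X Y : Fin n → ℂ) :
    (∑ α, ∑ β, ∑ μ, ∑ ν, M α β * N μ ν * X α * Y β * X μ * Y ν)
      = bil M X Y * bil N X Y := by
  rw [bil_mul_expand]
  exact Finset.sum_congr rfl fun α _ => Finset.sum_congr rfl fun β _ =>
    Finset.sum_congr rfl fun μ _ => Finset.sum_congr rfl fun ν _ => by ring

lemma pm2 (M N : Fin n → Fin n → ℂ) (X Y : Fin n → ℂ) :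
    (∑ α, ∑ β, ∑ μ, ∑ ν, M μ β * N α ν * X α * Y β * X μ * Y ν)
      = bil M X Y * bil N X Y := by
  rw [swap13 (fun α β μ ν => M μ β * N α ν * X α * Y β * X μ * Y ν), bil_mul_expand]
  exact Finset.sum_congr rfl fun α _ => Finset.sum_congr rfl fun β _ =>
    Finset.sum_congr rfl fun μ _ => Finset.sum_congr rfl fun ν _ => by ring

lemma pm3 (M N : Fin n → Fin n → ℂ) (X Y : Fin n → ℂ) :
    (∑ α, ∑ β, ∑ μ, ∑ ν, M α ν * N μ β * X α * Y β * X μ * Y ν)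
      = bil M X Y * bil N X Y := by
  rw [swap24 (fun α β μ ν => M α ν * N μ β * X α * Y β * X μ * Y ν), bil_mul_expand]
  exact Finset.sum_congr rfl fun α _ => Finset.sum_congr rfl fun β _ =>
    Finset.sum_congr rfl fun μ _ => Finset.sum_congr rfl fun ν _ => by ring

lemma pm4 (M N : Fin n → Fin n → ℂ) (X Y : Fin n → ℂ) :
    (∑ α, ∑ β, ∑ μ, ∑ ν, M μ ν * N α β * X α * Y β * X μ * Y ν)
      = bil M X Y * bil N X Y := by
  rw [swap13 (fun α β μ ν => M μ ν * N α β * X α * Y β * X μ * Y ν),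
    swap24 (fun α β μ ν => M α ν * N μ β * X μ * Y β * X α * Y ν), bil_mul_expand]
  exact Finset.sum_congr rfl fun α _ => Finset.sum_congr rfl fun β _ =>
    Finset.sum_congr rfl fun μ _ => Finset.sum_congr rfl fun ν _ => by ring


/-! ### Polarization -/

lemma polarize (Φ : (Fin n → ℂ) → (Fin n → ℂ) → (Fin n → ℂ) → (Fin n → ℂ) → ℂ)
    (add1 : ∀ X X' U Y V, Φ (X + X') U Y V = Φ X U Y V + Φ X' U Y V)
    (smul1 : ∀ (t : ℂ) X U Y V, Φ (t • X) U Y V = t * Φ X U Y V)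
    (add2 : ∀ X U U' Y V, Φ X (U + U') Y V = Φ X U Y V + Φ X U' Y V)
    (smul2 : ∀ (t : ℂ) X U Y V, Φ X (t • U) Y V = t * Φ X U Y V)
    (add3 : ∀ X U Y Y' V, Φ X U (Y + Y') V = Φ X U Y V + Φ X U Y' V)
    (smul3 : ∀ (t : ℂ) X U Y V, Φ X U (t • Y) V = t * Φ X U Y V)
    (add4 : ∀ X U Y V V', Φ X U Y (V + V') = Φ X U Y V + Φ X U Y V')
    (smul4 : ∀ (t : ℂ) X U Y V, Φ X U Y (t • V) = t * Φ X U Y V)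
    (sym12 : ∀ X U Y V, Φ X U Y V = Φ U X Y V)
    (sym34 : ∀ X U Y V, Φ X U Y V = Φ X U V Y)
    (h0 : ∀ X, Φ X X (conjVec X) (conjVec X) = 0) :
    ∀ X U Y V, Φ X U Y V = 0 := by
  have claim1 : ∀ P Q, Φ P Q (conjVec P) (conjVec Q) = 0 := by
    intro P Q
    have hc := coeff11
      (Φ P P (conjVec P) (conjVec P))
      (Φ Q P (conjVec P) (conjVec P) + Φ P Q (conjVec P) (conjVec P))
      (Φ P P (conjVec Q) (conjVec P) + Φ P P (conjVec P) (conjVec Q))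
      (Φ Q P (conjVec Q) (conjVec P) + Φ P Q (conjVec Q) (conjVec P)
        + Φ Q P (conjVec P) (conjVec Q) + Φ P Q (conjVec P) (conjVec Q))
      (Φ Q Q (conjVec P) (conjVec P))
      (Φ P P (conjVec Q) (conjVec Q))
      (Φ Q Q (conjVec Q) (conjVec P) + Φ Q Q (conjVec P) (conjVec Q))
      (Φ Q P (conjVec Q) (conjVec Q) + Φ P Q (conjVec Q) (conjVec Q))
      (Φ Q Q (conjVec Q) (conjVec Q))
      (fun t => by
        have h := h0 (P + t • Q)
        rw [conjVec_add_smul] at h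
        simp only [add1, add2, add3, add4, smul1, smul2, smul3, smul4] at h
        linear_combination h)
    have hA : Φ Q P (conjVec Q) (conjVec P) = Φ P Q (conjVec P) (conjVec Q) := by
      rw [sym12, sym34]
    have hB : Φ P Q (conjVec Q) (conjVec P) = Φ P Q (conjVec P) (conjVec Q) := by
      rw [sym34]
    have hC : Φ Q P (conjVec P) (conjVec Q) = Φ P Q (conjVec P) (conjVec Q) := by
      rw [sym12]
    linear_combination (1/4 : ℂ) * hc - (1/4 : ℂ) * hA - (1/4 : ℂ) * hB - (1/4 : ℂ) * hC
  have claim2 : ∀ R Q Y, Φ R Q Y (conjVec Q) = 0 := by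
    intro R Q Y
    have hc := coeff10
      (Φ (conjVec Y) Q (conjVec (conjVec Y)) (conjVec Q))
      (Φ R Q (conjVec (conjVec Y)) (conjVec Q))
      (Φ (conjVec Y) Q (conjVec R) (conjVec Q))
      (Φ R Q (conjVec R) (conjVec Q))
      (fun t => by
        have h := claim1 ((conjVec Y) + t • R) Q
        rw [conjVec_add_smul] at h
        simp only [add1, add3, smul1, smul3] at h
        linear_combination h)
    rw [conjVec_conjVec] at hc
    exact hc
  intro X U Y V
  have hc := coeff10
    (Φ X (conjVec V) Y (conjVec (conjVec V)))
    (Φ X U Y (conjVec (conjVec V)))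
    (Φ X (conjVec V) Y (conjVec U))
    (Φ X U Y (conjVec U))
    (fun t => by
      have h := claim2 X ((conjVec V) + t • U) Y
      rw [conjVec_add_smul] at h
      simp only [add2, add4, smul2, smul4] at h
      linear_combination h)
  rw [conjVec_conjVec] at hc
  exact hc

/-! ### The structured quartic form -/

def GPfun (G : Fin m → Fin m → ℂ) (A Bc : Fin m → Fin n → Fin n → ℂ)
    (X U Y V : Fin n → ℂ) : ℂ :=
  ∑ a, ∑ b, G a b * bil (A a) X U * bil (Bc b) Y V

variable (G : Fin m → Fin m → ℂ) (A Bc : Fin m → Fin n → Fin n → ℂ)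

lemma GPfun_add1 (X X' U Y V : Fin n → ℂ) :
    GPfun G A Bc (X + X') U Y V = GPfun G A Bc X U Y V + GPfun G A Bc X' U Y V := by
  simp only [GPfun, bil_add_left, mul_add, add_mul, Finset.sum_add_distrib]

lemma GPfun_add2 (X U U' Y V : Fin n → ℂ) :
    GPfun G A Bc X (U + U') Y V = GPfun G A Bc X U Y V + GPfun G A Bc X U' Y V := by
  simp only [GPfun, bil_add_right, mul_add, add_mul, Finset.sum_add_distrib]

lemma GPfun_add3 (X U Y Y' V : Fin n → ℂ) :
    GPfun G A Bc X U (Y + Y') V = GPfun G A Bc X U Y V + GPfun G A Bc X U Y' V := by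
  simp only [GPfun, bil_add_left, mul_add, add_mul, Finset.sum_add_distrib]

lemma GPfun_add4 (X U Y V V' : Fin n → ℂ) :
    GPfun G A Bc X U Y (V + V') = GPfun G A Bc X U Y V + GPfun G A Bc X U Y V' := by
  simp only [GPfun, bil_add_right, mul_add, add_mul, Finset.sum_add_distrib]

lemma GPfun_smul1 (t : ℂ) (X U Y V : Fin n → ℂ) :
    GPfun G A Bc (t • X) U Y V = t * GPfun G A Bc X U Y V := by
  simp only [GPfun, bil_smul_left, Finset.mul_sum]
  exact Finset.sum_congr rfl fun a _ => Finset.sum_congr rfl fun b _ => by ring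

lemma GPfun_smul2 (t : ℂ) (X U Y V : Fin n → ℂ) :
    GPfun G A Bc X (t • U) Y V = t * GPfun G A Bc X U Y V := by
  simp only [GPfun, bil_smul_right, Finset.mul_sum]
  exact Finset.sum_congr rfl fun a _ => Finset.sum_congr rfl fun b _ => by ring

lemma GPfun_smul3 (t : ℂ) (X U Y V : Fin n → ℂ) :
    GPfun G A Bc X U (t • Y) V = t * GPfun G A Bc X U Y V := by
  simp only [GPfun, bil_smul_left, Finset.mul_sum]
  exact Finset.sum_congr rfl fun a _ => Finset.sum_congr rfl fun b _ => by ring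

lemma GPfun_smul4 (t : ℂ) (X U Y V : Fin n → ℂ) :
    GPfun G A Bc X U Y (t • V) = t * GPfun G A Bc X U Y V := by
  simp only [GPfun, bil_smul_right, Finset.mul_sum]
  exact Finset.sum_congr rfl fun a _ => Finset.sum_congr rfl fun b _ => by ring

def Phi (G : Fin m → Fin m → ℂ) (A Bc : Fin m → Fin n → Fin n → ℂ)
    (K g : Fin n → Fin n → ℂ) (X U Y V : Fin n → ℂ) : ℂ :=
  GPfun G A Bc X U Y V + GPfun G A Bc U X Y V + GPfun G A Bc X U V Y + GPfun G A Bc U X V Y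
    - (bil g X Y * bil K U V + bil g X V * bil K U Y + bil g U Y * bil K X V
        + bil g U V * bil K X Y)

variable (K g : Fin n → Fin n → ℂ)

lemma Phi_add1 (X X' U Y V : Fin n → ℂ) :
    Phi G A Bc K g (X + X') U Y V = Phi G A Bc K g X U Y V + Phi G A Bc K g X' U Y V := by
  simp only [Phi, GPfun_add1, GPfun_add2, bil_add_left, bil_add_right]; ring

lemma Phi_add2 (X U U' Y V : Fin n → ℂ) :
    Phi G A Bc K g X (U + U') Y V = Phi G A Bc K g X U Y V + Phi G A Bc K g X U' Y V := by
  simp only [Phi, GPfun_add1, GPfun_add2, bil_add_left, bil_add_right]; ring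

lemma Phi_add3 (X U Y Y' V : Fin n → ℂ) :
    Phi G A Bc K g X U (Y + Y') V = Phi G A Bc K g X U Y V + Phi G A Bc K g X U Y' V := by
  simp only [Phi, GPfun_add3, GPfun_add4, bil_add_left, bil_add_right]; ring

lemma Phi_add4 (X U Y V V' : Fin n → ℂ) :
    Phi G A Bc K g X U Y (V + V') = Phi G A Bc K g X U Y V + Phi G A Bc K g X U Y V' := by
  simp only [Phi, GPfun_add3, GPfun_add4, bil_add_left, bil_add_right]; ring

lemma Phi_smul1 (t : ℂ) (X U Y V : Fin n → ℂ) :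
    Phi G A Bc K g (t • X) U Y V = t * Phi G A Bc K g X U Y V := by
  simp only [Phi, GPfun_smul1, GPfun_smul2, bil_smul_left, bil_smul_right]; ring

lemma Phi_smul2 (t : ℂ) (X U Y V : Fin n → ℂ) :
    Phi G A Bc K g X (t • U) Y V = t * Phi G A Bc K g X U Y V := by
  simp only [Phi, GPfun_smul1, GPfun_smul2, bil_smul_left, bil_smul_right]; ring

lemma Phi_smul3 (t : ℂ) (X U Y V : Fin n → ℂ) :
    Phi G A Bc K g X U (t • Y) V = t * Phi G A Bc K g X U Y V := by
  simp only [Phi, GPfun_smul3, GPfun_smul4, bil_smul_left, bil_smul_right]; ring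

lemma Phi_smul4 (t : ℂ) (X U Y V : Fin n → ℂ) :
    Phi G A Bc K g X U Y (t • V) = t * Phi G A Bc K g X U Y V := by
  simp only [Phi, GPfun_smul3, GPfun_smul4, bil_smul_left, bil_smul_right]; ring

lemma Phi_sym12 (X U Y V : Fin n → ℂ) :
    Phi G A Bc K g X U Y V = Phi G A Bc K g U X Y V := by
  simp only [Phi]; ring

lemma Phi_sym34 (X U Y V : Fin n → ℂ) :
    Phi G A Bc K g X U Y V = Phi G A Bc K g X U V Y := by
  simp only [Phi]; ring

/-! ### Rearranging the right-hand side -/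

lemma sum_rotate {I J : Type*} [Fintype I] [Fintype J] (f : I → I → J → ℂ) :
    (∑ a, ∑ b, ∑ c, f a b c) = ∑ c, ∑ a, ∑ b, f a b c :=
  calc (∑ a, ∑ b, ∑ c, f a b c) = ∑ a, ∑ c, ∑ b, f a b c :=
        Finset.sum_congr rfl (fun _ _ => Finset.sum_comm)
    _ = ∑ c, ∑ a, ∑ b, f a b c := Finset.sum_comm

lemma rhs_eq {k : ℕ} (H Hh Hs Ht : Fin k → Fin n → Fin n → ℂ) (g : Fin n → Fin n → ℂ)
    (X Y : Fin n → ℂ) :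
    (∑ l, ∑ α, ∑ β, ∑ μ, ∑ ν,
        (H l α β * g μ ν + Hh l μ β * g α ν + Hs l α ν * g μ β + Ht l μ ν * g α β)
          * X α * Y β * X μ * Y ν)
      = bil g X Y
          * bil (fun α β => ∑ l, (H l α β + Hh l α β + Hs l α β + Ht l α β)) X Y := by
  have hK : bil (fun α β => ∑ l, (H l α β + Hh l α β + Hs l α β + Ht l α β)) X Y
      = ∑ l, (bil (H l) X Y + bil (Hh l) X Y + bil (Hs l) X Y + bil (Ht l) X Y) := by
    have step1 : bil (fun α β => ∑ l, (H l α β + Hh l α β + Hs l α β + Ht l α β)) X Y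
        = ∑ α, ∑ β, ∑ l, (H l α β + Hh l α β + Hs l α β + Ht l α β) * X α * Y β := by
      simp only [bil, Finset.sum_mul]
    rw [step1, sum_rotate (fun α β l => (H l α β + Hh l α β + Hs l α β + Ht l α β) * X α * Y β)]
    refine Finset.sum_congr rfl fun l _ => ?_
    simp only [bil, add_mul, Finset.sum_add_distrib]
  rw [hK, Finset.mul_sum]
  refine Finset.sum_congr rfl fun l _ => ?_
  have hsplit : (∑ α, ∑ β, ∑ μ, ∑ ν,
        (H l α β * g μ ν + Hh l μ β * g α ν + Hs l α ν * g μ β + Ht l μ ν * g α β)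
          * X α * Y β * X μ * Y ν)
      = (∑ α, ∑ β, ∑ μ, ∑ ν, H l α β * g μ ν * X α * Y β * X μ * Y ν)
        + (∑ α, ∑ β, ∑ μ, ∑ ν, Hh l μ β * g α ν * X α * Y β * X μ * Y ν)
        + (∑ α, ∑ β, ∑ μ, ∑ ν, Hs l α ν * g μ β * X α * Y β * X μ * Y ν)
        + (∑ α, ∑ β, ∑ μ, ∑ ν, Ht l μ ν * g α β * X α * Y β * X μ * Y ν) := by
    simp only [add_mul, Finset.sum_add_distrib]
  rw [hsplit, pm1 (H l) g, pm2 (Hh l) g, pm3 (Hs l) g, pm4 (Ht l) g]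
  ring

/-! ### Left-hand side as a GPfun -/

lemma lhs_eq {m n : ℕ} (G : Fin m → Fin m → ℂ) (A B : Fin m → Fin n → Fin n → ℂ)
    (Z : Fin n → ℂ) :
    (∑ a, ∑ b, G a b * (∑ α, ∑ β, A a α β * Z α * Z β) *
        (starRingEnd ℂ) (∑ μ, ∑ ν, B b μ ν * Z μ * Z ν))
      = GPfun G A (fun b μ ν => (starRingEnd ℂ) (B b μ ν)) Z Z (conjVec Z) (conjVec Z) := by
  simp only [GPfun, bil, conjVec]
  refine Finset.sum_congr rfl fun a _ => Finset.sum_congr rfl fun b _ => ?_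
  congr 1
  rw [map_sum]
  refine Finset.sum_congr rfl fun μ _ => ?_
  rw [map_sum]
  refine Finset.sum_congr rfl fun ν _ => ?_
  rw [map_mul, map_mul]

/-! ### matrix-vector helpers -/

def mvec (M : Fin n → Fin n → ℂ) (v : Fin n → ℂ) : Fin n → ℂ := fun α => ∑ β, M α β * v β

lemma mvec_add (M : Fin n → Fin n → ℂ) (v w : Fin n → ℂ) :
    mvec M (v + w) = mvec M v + mvec M w := by
  funext α; simp [mvec, mul_add, Finset.sum_add_distrib]

lemma mvec_sub (M : Fin n → Fin n → ℂ) (v w : Fin n → ℂ) :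
    mvec M (v - w) = mvec M v - mvec M w := by
  funext α; simp [mvec, mul_sub, Finset.sum_sub_distrib]

lemma mvec_smul (M : Fin n → Fin n → ℂ) (t : ℂ) (v : Fin n → ℂ) :
    mvec M (t • v) = t • mvec M v := by
  funext α
  simp only [mvec, Pi.smul_apply, smul_eq_mul, Finset.mul_sum]
  exact Finset.sum_congr rfl fun β _ => by ring

lemma mvec_zero (M : Fin n → Fin n → ℂ) : mvec M 0 = 0 := by
  funext α; simp [mvec]

lemma mvec_single (M : Fin n → Fin n → ℂ) (j : Fin n) :
    mvec M (ebasis j) = fun α => M α j := by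
  funext α
  simp [mvec, ebasis, Pi.single_apply, mul_ite]

lemma bil_form (M : Fin n → Fin n → ℂ) (X v : Fin n → ℂ) :
    bil M X v = form (mvec M v) X := by
  simp only [bil, form, mvec, Finset.sum_mul]
  exact Finset.sum_congr rfl fun α _ => Finset.sum_congr rfl fun β _ => by ring

/-! ### kernel existence -/

lemma exists_ker {n m : ℕ} (hmn : m < n) (L : (Fin n → ℂ) → (Fin m → ℂ))
    (hadd : ∀ x y, L (x + y) = L x + L y) (hsmul : ∀ (t : ℂ) x, L (t • x) = t • L x) :
    ∃ u : Fin n → ℂ, u ≠ 0 ∧ L u = 0 := by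
  let Lm : (Fin n → ℂ) →ₗ[ℂ] (Fin m → ℂ) :=
    { toFun := L, map_add' := hadd, map_smul' := hsmul }
  by_cases hker : LinearMap.ker Lm = ⊥
  · exfalso
    have hinj : Function.Injective Lm := LinearMap.ker_eq_bot.mp hker
    have hle := LinearMap.finrank_le_finrank_of_injective hinj
    rw [Module.finrank_fintype_fun_eq_card, Module.finrank_fintype_fun_eq_card,
      Fintype.card_fin, Fintype.card_fin] at hle
    omega
  · obtain ⟨u, hu, hu0⟩ := (Submodule.ne_bot_iff _).mp hker
    exact ⟨u, hu0, hu⟩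

end

end HuangRigidity

open HuangRigidity

open Complex in
/-- Tensor version of Huang's rigidity lemma (Lemma 2.1). -/
theorem tensor_rigidity_lemma (n N k : ℕ) (hn : 0 < n) (hN : 0 < N) (hk : 0 < k)
    (hdim : N - n ≤ n - 1)
    (A B : Fin (N - n) → Fin n → Fin n → ℂ)
    (G : Fin (N - n) → Fin (N - n) → ℂ)
    (hG : ∀ a b, G a b = (starRingEnd ℂ) (G b a))
    (g : Fin n → Fin n → ℂ)
    (hgHerm : ∀ α β, g α β = (starRingEnd ℂ) (g β α))
    (hgPos : ∀ X : Fin n → ℂ, X ≠ 0 →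
      0 < (∑ α, ∑ β, g α β * X α * (starRingEnd ℂ) (X β)).re)
    (H Hhat Hstar Htilde : Fin k → Fin n → Fin n → ℂ)
    (hH : ∀ l α β, H l α β = (starRingEnd ℂ) (H l β α))
    (hHhat : ∀ l α β, Hhat l α β = (starRingEnd ℂ) (Hhat l β α))
    (hHstar : ∀ l α β, Hstar l α β = (starRingEnd ℂ) (Hstar l β α))
    (hHtilde : ∀ l α β, Htilde l α β = (starRingEnd ℂ) (Htilde l β α))
    (heq : ∀ X : Fin n → ℂ,
      ∑ a, ∑ b, G a b * (∑ α, ∑ β, A a α β * X α * X β) *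
          (starRingEnd ℂ) (∑ μ, ∑ ν, B b μ ν * X μ * X ν) =
        ∑ l, ∑ α, ∑ β, ∑ μ, ∑ ν,
          (H l α β * g μ ν + Hhat l μ β * g α ν + Hstar l α ν * g μ β +
              Htilde l μ ν * g α β) *
            X α * (starRingEnd ℂ) (X β) * X μ * (starRingEnd ℂ) (X ν)) :
    ∀ X : Fin n → ℂ,
      ∑ a, ∑ b, G a b * (∑ α, ∑ β, A a α β * X α * X β) *
          (starRingEnd ℂ) (∑ μ, ∑ ν, B b μ ν * X μ * X ν) = 0 := by
  classical
  intro X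
  by_cases hm0 : N - n = 0
  · haveI : IsEmpty (Fin (N - n)) := by rw [hm0]; infer_instance
    rw [Finset.univ_eq_empty, Finset.sum_empty]
  -- main case
  have hm : 0 < N - n := Nat.pos_of_ne_zero hm0
  have hmn : N - n < n := lt_of_le_of_lt hdim (Nat.sub_lt hn zero_lt_one)
  have h2n : 2 ≤ n := by omega
  set Bc : Fin (N - n) → Fin n → Fin n → ℂ := fun b μ ν => (starRingEnd ℂ) (B b μ ν)
    with hBcdef
  set K : Fin n → Fin n → ℂ :=
    fun α β => ∑ l, (H l α β + Hhat l α β + Hstar l α β + Htilde l α β) with hKdef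
  -- the basic identity at conjugate points
  have h0 : ∀ Z : Fin n → ℂ,
      GPfun G A Bc Z Z (conjVec Z) (conjVec Z)
        = bil g Z (conjVec Z) * bil K Z (conjVec Z) := by
    intro Z
    have h := heq Z
    have hconj : ∀ β : Fin n, (starRingEnd ℂ) (Z β) = conjVec Z β := fun β => rfl
    calc GPfun G A Bc Z Z (conjVec Z) (conjVec Z)
        = ∑ a, ∑ b, G a b * (∑ α, ∑ β, A a α β * Z α * Z β) *
            (starRingEnd ℂ) (∑ μ, ∑ ν, B b μ ν * Z μ * Z ν) := (lhs_eq G A B Z).symm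
      _ = ∑ l, ∑ α, ∑ β, ∑ μ, ∑ ν,
            (H l α β * g μ ν + Hhat l μ β * g α ν + Hstar l α ν * g μ β +
                Htilde l μ ν * g α β) *
              Z α * (conjVec Z) β * Z μ * (conjVec Z) ν := h
      _ = bil g Z (conjVec Z) * bil K Z (conjVec Z) := by
            rw [rhs_eq H Hhat Hstar Htilde g Z (conjVec Z), hKdef]
  -- polarization: the full identity
  have h0' : ∀ Z : Fin n → ℂ, Phi G A Bc K g Z Z (conjVec Z) (conjVec Z) = 0 := by
    intro Z
    have := h0 Z
    simp only [Phi]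
    linear_combination 4 * this
  have hpol := polarize (Phi G A Bc K g)
    (Phi_add1 G A Bc K g) (Phi_smul1 G A Bc K g)
    (Phi_add2 G A Bc K g) (Phi_smul2 G A Bc K g)
    (Phi_add3 G A Bc K g) (Phi_smul3 G A Bc K g)
    (Phi_add4 G A Bc K g) (Phi_smul4 G A Bc K g)
    (Phi_sym12 G A Bc K g) (Phi_sym34 G A Bc K g) h0'
  have hmaster : ∀ W Y : Fin n → ℂ,
      GPfun G A Bc W W Y Y = bil g W Y * bil K W Y := by
    intro W Y
    have := hpol W W Y Y
    simp only [Phi] at this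
    linear_combination this / 4
  -- polarized (in the Y-slot) consequence for null directions
  have key_u : ∀ Z u : Fin n → ℂ, (∀ b, bil (Bc b) u Z + bil (Bc b) Z u = 0) →
      ∀ W, bil g W u * bil K W Z + bil g W Z * bil K W u = 0 := by
    intro Z u hu W
    have h1 := hmaster W (u + Z)
    have h2 := hmaster W u
    have h3 := hmaster W Z
    have hGP : GPfun G A Bc W W (u + Z) (u + Z)
        = GPfun G A Bc W W u u + GPfun G A Bc W W Z Z := by
      rw [GPfun_add3, GPfun_add4, GPfun_add4]
      have hz : GPfun G A Bc W W u Z + GPfun G A Bc W W Z u = 0 := by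
        simp only [GPfun]
        rw [← Finset.sum_add_distrib]
        refine Finset.sum_eq_zero fun a _ => ?_
        rw [← Finset.sum_add_distrib]
        refine Finset.sum_eq_zero fun b _ => ?_
        have := hu b
        linear_combination (G a b * bil (A a) W W) * this
      linear_combination hz
    rw [hGP, bil_add_right, bil_add_right] at h1
    linear_combination h2 + h3 - h1
  -- nondegeneracy of g
  have ginj : ∀ v : Fin n → ℂ, mvec g v = 0 → v = 0 := by
    intro v hv
    by_contra hv0
    have hcz : conjVec v ≠ 0 := by
      intro hc
      apply hv0
      funext i
      have : (starRingEnd ℂ) (v i) = 0 := congrFun hc i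
      simpa using congrArg (starRingEnd ℂ) this
    have hpos := hgPos (conjVec v) hcz
    have hzero : (∑ α, ∑ β, g α β * (conjVec v) α * (starRingEnd ℂ) ((conjVec v) β)) = 0 := by
      refine Finset.sum_eq_zero fun α _ => ?_
      have hrow : mvec g v α = 0 := congrFun hv α
      calc (∑ β, g α β * (conjVec v) α * (starRingEnd ℂ) ((conjVec v) β))
          = (conjVec v) α * ∑ β, g α β * v β := by
            rw [Finset.mul_sum]
            refine Finset.sum_congr rfl fun β _ => ?_
            simp only [conjVec, Complex.conj_conj]
            ring
        _ = 0 := by rw [show (∑ β, g α β * v β) = mvec g v α from rfl, hrow, mul_zero]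
    rw [hzero] at hpos
    simp at hpos
  -- pointwise proportionality
  have perZ : ∀ Z : Fin n → ℂ, ∃ lam : ℂ, mvec K Z = lam • mvec g Z := by
    intro Z
    by_cases hkz : mvec K Z = 0
    · exact ⟨0, by rw [hkz, zero_smul]⟩
    · have hZ0 : Z ≠ 0 := by
        intro h
        exact hkz (by rw [h, mvec_zero])
      have hgZ : mvec g Z ≠ 0 := fun h => hZ0 (ginj Z h)
      obtain ⟨u, hu0, huker⟩ := exists_ker hmn
        (fun Yv => fun b => bil (Bc b) Yv Z + bil (Bc b) Z Yv)
        (fun x y => by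
          funext b
          simp [bil_add_left, bil_add_right]
          ring)
        (fun t x => by
          funext b
          simp [bil_smul_left, bil_smul_right]
          ring)
      have hu : ∀ b, bil (Bc b) u Z + bil (Bc b) Z u = 0 := fun b => congrFun huker b
      have hgu : mvec g u ≠ 0 := fun h => hu0 (ginj u h)
      have hperp : ∀ W, form (mvec g u) W * form (mvec K Z) W
          + form (mvec g Z) W * form (mvec K u) W = 0 := by
        intro W
        have := key_u Z u hu W
        rw [bil_form, bil_form, bil_form, bil_form] at this
        exact this
      have hker : ∀ W, form (mvec g Z) W = 0 →
          form (mvec g u) W * form (mvec K Z) W = 0 := by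
        intro W hW
        have := hperp W
        rw [hW] at this
        linear_combination this
      rcases ker_mult (mvec g u) (mvec K Z) (mvec g Z) hgZ hker with ⟨lam, hl⟩ | ⟨lam, hl⟩
      · exfalso
        have hulam : u = lam • Z := by
          have hsub : mvec g (u - lam • Z) = 0 := by
            rw [mvec_sub, mvec_smul, hl]
            abel
          have := ginj _ hsub
          rwa [sub_eq_zero] at this
        have hlam0 : lam ≠ 0 := by
          intro h
          rw [h, zero_smul] at hulam
          exact hu0 hulam
        have hku : mvec K u = lam • mvec K Z := by rw [hulam, mvec_smul]
        have hprod : ∀ W, form (mvec g Z) W * form (mvec K Z) W = 0 := by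
          intro W
          have := hperp W
          rw [hl, hku, form_smul_vec, form_smul_vec] at this
          have h2 : lam * (form (mvec g Z) W * form (mvec K Z) W) * 2 = 0 := by
            linear_combination this
          have h3 := mul_eq_zero.mp h2
          rcases h3 with h3 | h3
          · exact (mul_eq_zero.mp h3).resolve_left hlam0
          · exact absurd h3 two_ne_zero
        rcases prod_forms_zero _ _ hprod with h | h
        · exact hgZ h
        · exact hkz h
      · exact ⟨lam, hl⟩
  -- a single constant of proportionality
  set lam : Fin n → ℂ := fun j => Classical.choose (perZ (ebasis j)) with hlamdef
  have lamspec : ∀ j, mvec K (ebasis j) = lam j • mvec g (ebasis j) :=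
    fun j => Classical.choose_spec (perZ (ebasis j))
  have lamAll : ∀ i j : Fin n, i ≠ j → lam i = lam j := by
    intro i j hij
    obtain ⟨lam', hl'⟩ := perZ (ebasis i + ebasis j)
    rw [mvec_add, mvec_add] at hl'
    have hcomb : mvec g ((lam i - lam') • ebasis i + (lam j - lam') • ebasis j) = 0 := by
      rw [mvec_add, mvec_smul, mvec_smul]
      funext α
      have e1 := congrFun (lamspec i) α
      have e2 := congrFun (lamspec j) α
      have e3 := congrFun hl' α
      simp only [Pi.add_apply, Pi.smul_apply, smul_eq_mul, Pi.zero_apply] at e1 e2 e3 ⊢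
      linear_combination e3 - e1 - e2
    have hzero := ginj _ hcomb
    have hi := congrFun hzero i
    have hj := congrFun hzero j
    simp only [Pi.add_apply, Pi.smul_apply, Pi.zero_apply, smul_eq_mul, ebasis,
      Pi.single_eq_same, Pi.single_eq_of_ne hij, Pi.single_eq_of_ne (Ne.symm hij),
      mul_one, mul_zero, add_zero, zero_add] at hi hj
    have e1 : lam i = lam' := by linear_combination hi
    have e2 : lam j = lam' := by linear_combination hj
    rw [e1, e2]
  set mu : ℂ := lam ⟨0, hn⟩ with hmudef
  have hlamall : ∀ j, lam j = mu := by
    intro j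
    by_cases h : j = ⟨0, hn⟩
    · rw [h]
    · exact lamAll j ⟨0, hn⟩ h
  have hKG : ∀ α β, K α β = mu * g α β := by
    intro α β
    have := congrFun (lamspec β) α
    simp only [mvec_single, Pi.smul_apply, smul_eq_mul] at this
    rw [hlamall β] at this
    exact this
  by_cases hmu : mu = 0
  · -- then K = 0 and we are done
    rw [lhs_eq G A B X, ← hBcdef, hmaster X (conjVec X)]
    have hbilK : bil K X (conjVec X) = 0 := by
      simp only [bil]
      refine Finset.sum_eq_zero fun α _ => Finset.sum_eq_zero fun β _ => ?_
      rw [hKG α β, hmu]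
      ring
    rw [hbilK, mul_zero]
  · -- otherwise we contradict the dimension bound
    exfalso
    set gM : Matrix (Fin n) (Fin n) ℂ := Matrix.of g with hgM
    have hmulvec : ∀ v, gM.mulVec v = mvec g v := by
      intro v
      funext α
      simp [Matrix.mulVec, dotProduct, hgM, mvec]
    have hkerg : LinearMap.ker gM.mulVecLin = ⊥ := by
      rw [Submodule.eq_bot_iff]
      intro v hv
      rw [LinearMap.mem_ker, Matrix.mulVecLin_apply, hmulvec] at hv
      exact ginj v hv
    have hinj : Function.Injective gM.mulVecLin := LinearMap.ker_eq_bot.mp hkerg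
    have hsurj := LinearMap.injective_iff_surjective.mp hinj
    choose w hw using fun j => hsurj (ebasis j)
    set Bm : Matrix (Fin n) (Fin n) ℂ := Matrix.of (fun i j => w j i) with hBm
    have hright : gM * Bm = 1 := by
      ext i j
      rw [Matrix.mul_apply, Matrix.one_apply]
      have hwj := congrFun (hw j) i
      rw [Matrix.mulVecLin_apply] at hwj
      have : (gM.mulVec (w j)) i = ∑ k, gM i k * Bm k j := by
        simp [Matrix.mulVec, dotProduct, hBm]
      rw [this] at hwj
      rw [hwj]
      simp [ebasis, Pi.single_apply]
    haveI := invertibleOfRightInverse gM Bm hright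
    have hinvmul : gM⁻¹ * gM = 1 := Matrix.inv_mul_of_invertible gM
    set Xr : Fin n → Fin n → ℂ := fun i => fun α => (gM⁻¹) i α with hXr
    have hXrg : ∀ i j, bil g (Xr i) (ebasis j) = (1 : Matrix (Fin n) (Fin n) ℂ) i j := by
      intro i j
      calc bil g (Xr i) (ebasis j) = ∑ α, (gM⁻¹) i α * gM α j := by
            simp only [bil, ebasis]
            refine Finset.sum_congr rfl fun α _ => ?_
            rw [Finset.sum_eq_single j]
            · simp [hXr, hgM]; ring
            · intro b _ hb
              simp [Pi.single_eq_of_ne hb]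
            · intro hj
              exact absurd (Finset.mem_univ j) hj
        _ = (gM⁻¹ * gM) i j := by rw [Matrix.mul_apply]
        _ = (1 : Matrix (Fin n) (Fin n) ℂ) i j := by rw [hinvmul]
    have hbilK : ∀ W Y : Fin n → ℂ, bil K W Y = mu * bil g W Y := by
      intro W Y
      simp only [bil, Finset.mul_sum]
      refine Finset.sum_congr rfl fun α _ => Finset.sum_congr rfl fun β _ => ?_
      rw [hKG α β]
      ring
    set Cm : Matrix (Fin n) (Fin (N - n)) ℂ :=
      Matrix.of (fun i b => mu⁻¹ * ∑ a, G a b * bil (A a) (Xr i) (Xr i)) with hCm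
    set Qm : Matrix (Fin (N - n)) (Fin n) ℂ :=
      Matrix.of (fun b j => bil (Bc b) (ebasis j) (ebasis j)) with hQm
    have hCQ : Cm * Qm = 1 := by
      ext i j
      rw [Matrix.mul_apply]
      have hswap : ∑ b, Cm i b * Qm b j
          = mu⁻¹ * GPfun G A Bc (Xr i) (Xr i) (ebasis j) (ebasis j) := by
        simp only [hCm, hQm, Matrix.of_apply, GPfun, Finset.mul_sum, Finset.sum_mul]
        rw [Finset.sum_comm]
        refine Finset.sum_congr rfl fun a _ => Finset.sum_congr rfl fun b _ => ?_
        ring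
      rw [hswap, hmaster (Xr i) (ebasis j), hbilK, hXrg i j, Matrix.one_apply]
      by_cases h : i = j
      · simp only [if_pos h]
        field_simp
      · simp only [if_neg h]
        ring
    have h1 : (Cm * Qm).rank = n := by rw [hCQ, Matrix.rank_one, Fintype.card_fin]
    have h2 : (Cm * Qm).rank ≤ N - n :=
      le_trans (Matrix.rank_mul_le_left Cm Qm)
        (le_trans (Matrix.rank_le_card_width Cm) (le_of_eq (Fintype.card_fin _)))
    omega
end

section
/- Let $n \ge 2$ and let $A^a_{\alpha\beta}$ ($1\le\alpha,\beta\le n$, $a$ in a finite index set $S$ with $|S| \le n-1$) be complex numbers symmetric in $\alpha,\beta$, and suppose there exists a real-valued function $A(X,\bar X)$, real-analytic in $X \in \mathbb{C}^n$, such that $\sum_{a\in S}\Big|\sum_{\alpha,\beta}A^a_{\alpha\beta}X^\alpha X^\beta\Big|^2 = |X|^2 A(X,\bar X)$ for all $X\in\mathbb{C}^n$. Then $A^a_{\alpha\beta} = 0$ for all $a, \alpha, \beta$. -/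
open Complex Finset

namespace SOSR

variable {n : ℕ} {S : Type*} [Fintype S]

/-- hermitian dot product (linear in first slot). -/
noncomputable def ipc (X Y : Fin n → ℂ) : ℂ := ∑ α, X α * (starRingEnd ℂ) (Y α)

lemma ipc_add_left (X X' Y : Fin n → ℂ) : ipc (X + X') Y = ipc X Y + ipc X' Y := by
  simp [ipc, add_mul, Finset.sum_add_distrib]

lemma ipc_smul_left (c : ℂ) (X Y : Fin n → ℂ) : ipc (c • X) Y = c * ipc X Y := by
  simp [ipc, Finset.mul_sum, mul_assoc]

lemma ipc_conj (X Y : Fin n → ℂ) : (starRingEnd ℂ) (ipc X Y) = ipc Y X := by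
  simp [ipc, map_sum, mul_comm]

lemma ipc_add_right (X Y Y' : Fin n → ℂ) : ipc X (Y + Y') = ipc X Y + ipc X Y' := by
  simp [ipc, mul_add, Finset.sum_add_distrib]

lemma ipc_smul_right (c : ℂ) (X Y : Fin n → ℂ) : ipc X (c • Y) = (starRingEnd ℂ) c * ipc X Y := by
  simp [ipc, Finset.mul_sum]; apply Finset.sum_congr rfl; intros; ring

lemma ipc_diag (X : Fin n → ℂ) : ipc X X = ((∑ α, Complex.normSq (X α) : ℝ) : ℂ) := by
  simp [ipc, Complex.mul_conj]

lemma sum_normSq_nonneg (X : Fin n → ℂ) : 0 ≤ ∑ α, Complex.normSq (X α) :=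
  Finset.sum_nonneg fun _ _ => Complex.normSq_nonneg _

lemma eq_zero_of_sum_normSq (X : Fin n → ℂ) (h : ∑ α, Complex.normSq (X α) = 0) : X = 0 := by
  funext α
  have := (Finset.sum_eq_zero_iff_of_nonneg (fun i _ => Complex.normSq_nonneg (X i))).mp h α (Finset.mem_univ α)
  simpa [Complex.normSq_eq_zero] using this

lemma sum_normSq_pos (X : Fin n → ℂ) (h : X ≠ 0) : 0 < ∑ α, Complex.normSq (X α) := by
  rcases lt_or_eq_of_le (sum_normSq_nonneg X) with h' | h'
  · exact h'
  · exact absurd (eq_zero_of_sum_normSq X h'.symm) h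

/-- Cauchy-Schwarz with equality criterion, in the form we need. -/
lemma ipc_cs (v w : Fin n → ℂ) (hv : v ≠ 0) :
    Complex.normSq (ipc w v) ≤ (∑ α, Complex.normSq (w α)) * (∑ α, Complex.normSq (v α)) ∧
    (Complex.normSq (ipc w v) = (∑ α, Complex.normSq (w α)) * (∑ α, Complex.normSq (v α)) →
      ∃ c : ℂ, w = c • v) := by
  set sv : ℝ := ∑ α, Complex.normSq (v α) with hsv
  set sw : ℝ := ∑ α, Complex.normSq (w α) with hsw
  have hsvpos : 0 < sv := sum_normSq_pos v hv
  set z : ℂ := ipc w v with hz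
  set u : Fin n → ℂ := (sv : ℂ) • w + (-z) • v with hu
  have hvw : ipc v w = (starRingEnd ℂ) z := by rw [hz, ipc_conj]
  have key : ipc u u = (sv : ℂ) * (((sv * sw : ℝ) : ℂ) - ((Complex.normSq z : ℝ) : ℂ)) := by
    rw [hu]
    simp only [ipc_add_left, ipc_add_right, ipc_smul_left, ipc_smul_right, ipc_diag w, ipc_diag v,
      ← hsv, ← hsw, ← hz, hvw, map_neg, Complex.conj_ofReal]
    have hzz := Complex.mul_conj z
    push_cast
    linear_combination (-(sv : ℂ)) * hzz
  have hre : (ipc u u) = ((∑ α, Complex.normSq (u α) : ℝ) : ℂ) := ipc_diag u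
  have hnn : (0:ℝ) ≤ sv * (sv * sw - Complex.normSq z) := by
    have h1 : ((sv * (sv * sw - Complex.normSq z) : ℝ) : ℂ) = ipc u u := by
      rw [key]; push_cast; ring
    rw [hre] at h1
    have := Complex.ofReal_injective h1
    rw [this]
    exact sum_normSq_nonneg u
  constructor
  · nlinarith [hnn, hsvpos]
  · intro heq
    have hu0 : ∑ α, Complex.normSq (u α) = 0 := by
      have h1 : ((sv * (sv * sw - Complex.normSq z) : ℝ) : ℂ) = ((∑ α, Complex.normSq (u α) : ℝ) : ℂ) := by
        rw [← hre, key]; push_cast; ring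
      have h2 := Complex.ofReal_injective h1
      rw [← h2, heq]; ring
    have hu0' : u = 0 := eq_zero_of_sum_normSq u hu0
    refine ⟨z / (sv : ℂ), ?_⟩
    have hsvne : (sv : ℂ) ≠ 0 := by
      simpa using ne_of_gt hsvpos
    funext α
    have := congrFun hu0' α
    simp only [hu, Pi.add_apply, Pi.smul_apply, smul_eq_mul, Pi.zero_apply] at this
    rw [Pi.smul_apply, smul_eq_mul, div_mul_eq_mul_div, eq_div_iff hsvne]
    linear_combination this

noncomputable def Qf (A : S → Fin n → Fin n → ℂ) (a : S) (X : Fin n → ℂ) : ℂ :=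
  ∑ α, ∑ β, A a α β * X α * X β

noncomputable def Rf (A : S → Fin n → Fin n → ℂ) (a : S) (X Y : Fin n → ℂ) : ℂ :=
  ∑ α, ∑ β, A a α β * (X α * Y β + Y α * X β)

lemma Qf_expand (A : S → Fin n → Fin n → ℂ) (a : S) (X Y : Fin n → ℂ) (c : ℂ) :
    Qf A a (X + c • Y) = Qf A a X + c * Rf A a X Y + c ^ 2 * Qf A a Y := by
  simp only [Qf, Rf, Pi.add_apply, Pi.smul_apply, smul_eq_mul, Finset.mul_sum,
    ← Finset.sum_add_distrib]
  apply Finset.sum_congr rfl; intros α _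
  apply Finset.sum_congr rfl; intros β _
  ring

lemma Rf_add_right (A : S → Fin n → Fin n → ℂ) (a : S) (X Y Y' : Fin n → ℂ) :
    Rf A a X (Y + Y') = Rf A a X Y + Rf A a X Y' := by
  simp only [Rf, Pi.add_apply, ← Finset.sum_add_distrib]
  apply Finset.sum_congr rfl; intros α _
  apply Finset.sum_congr rfl; intros β _
  ring

lemma Rf_smul_right (A : S → Fin n → Fin n → ℂ) (a : S) (c : ℂ) (X Y : Fin n → ℂ) :
    Rf A a X (c • Y) = c * Rf A a X Y := by
  simp only [Rf, Pi.smul_apply, smul_eq_mul, Finset.mul_sum]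
  apply Finset.sum_congr rfl; intros α _
  apply Finset.sum_congr rfl; intros β _
  ring

lemma Rf_diag (A : S → Fin n → Fin n → ℂ) (a : S) (X : Fin n → ℂ) :
    Rf A a X X = 2 * Qf A a X := by
  simp only [Rf, Qf, Finset.mul_sum]
  apply Finset.sum_congr rfl; intros α _
  apply Finset.sum_congr rfl; intros β _
  ring

lemma Qf_smul (A : S → Fin n → Fin n → ℂ) (a : S) (c : ℂ) (X : Fin n → ℂ) :
    Qf A a (c • X) = c ^ 2 * Qf A a X := by
  have := Qf_expand A a 0 X c
  simpa [Qf, Rf] using this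

lemma Qf_basis (A : S → Fin n → Fin n → ℂ) (a : S) (α : Fin n) :
    Qf A a (fun δ => if δ = α then 1 else 0) = A a α α := by
  simp [Qf]

lemma Rf_basis (A : S → Fin n → Fin n → ℂ) (a : S) (α β : Fin n) :
    Rf A a (fun δ => if δ = α then 1 else 0) (fun δ => if δ = β then 1 else 0)
      = A a α β + A a β α := by
  simp [Rf, mul_add, Finset.sum_add_distrib]

lemma quadratic_part (Afun : (Fin n → ℂ) → ℝ) (hC2 : ContDiff ℝ 2 Afun)
    (hhom : ∀ (t : ℝ) (X : Fin n → ℂ), Afun (t • X) = t ^ 2 * Afun X) (X : Fin n → ℂ) :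
    (fderiv ℝ (fderiv ℝ Afun) 0 X) X = 2 * Afun X := by
  have hd : Differentiable ℝ Afun := hC2.differentiable (by norm_num)
  have hf1 : ContDiff ℝ 1 (fderiv ℝ Afun) := hC2.fderiv_right (by norm_num)
  have hd1 : Differentiable ℝ (fderiv ℝ Afun) := hf1.differentiable (by norm_num)
  have step1 : ∀ t : ℝ, fderiv ℝ Afun (t • X) X = 2 * t * Afun X := by
    intro t
    have hsm : HasDerivAt (fun s : ℝ => s • X) X t := by
      simpa using (hasDerivAt_id t).smul_const X
    have h1 : HasDerivAt (fun s : ℝ => Afun (s • X)) (fderiv ℝ Afun (t • X) X) t := by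
      exact ((hd (t • X)).hasFDerivAt.comp_hasDerivAt t hsm)
    have h2 : HasDerivAt (fun s : ℝ => Afun (s • X)) (2 * t * Afun X) t := by
      have h3 : HasDerivAt (fun s : ℝ => s ^ 2 * Afun X) (2 * t * Afun X) t := by
        simpa [mul_comm] using (hasDerivAt_pow 2 t).mul_const (Afun X)
      exact h3.congr_of_eventuallyEq (Filter.Eventually.of_forall fun s => (hhom s X))
    exact h1.unique h2
  have hsm0 : HasDerivAt (fun s : ℝ => s • X) X 0 := by
    simpa using (hasDerivAt_id (0:ℝ)).smul_const X
  have hF : HasFDerivAt (fderiv ℝ Afun) (fderiv ℝ (fderiv ℝ Afun) 0) ((0:ℝ) • X) := by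
    simpa using (hd1 0).hasFDerivAt
  have hcomp : HasDerivAt (fun s : ℝ => fderiv ℝ Afun (s • X)) (fderiv ℝ (fderiv ℝ Afun) 0 X) 0 := by
    exact hF.comp_hasDerivAt 0 hsm0
  have happ : HasDerivAt (fun s : ℝ => fderiv ℝ Afun (s • X) X)
      ((fderiv ℝ (fderiv ℝ Afun) 0 X) X) 0 := by
    exact (ContinuousLinearMap.apply ℝ ℝ X).hasFDerivAt.comp_hasDerivAt 0 hcomp
  have hother : HasDerivAt (fun s : ℝ => fderiv ℝ Afun (s • X) X) (2 * Afun X) 0 := by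
    have h4 : HasDerivAt (fun s : ℝ => 2 * Afun X * s) (2 * Afun X) 0 := by
      simpa using (hasDerivAt_id (0:ℝ)).const_mul (2 * Afun X)
    refine h4.congr_of_eventuallyEq (Filter.Eventually.of_forall fun s => ?_)
    show (fderiv ℝ Afun (s • X)) X = 2 * Afun X * s
    rw [step1 s]; ring
  exact happ.unique hother

open Complex in
lemma core_nine (c00 c01 c02 c10 c11 c12 c20 c21 c22 : ℂ)
    (h : ∀ l : ℂ,
      c00 + c01 * (starRingEnd ℂ) l + c02 * ((starRingEnd ℂ) l)^2
      + c10 * l + c11 * l * (starRingEnd ℂ) l + c12 * l * ((starRingEnd ℂ) l)^2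
      + c20 * l^2 + c21 * l^2 * (starRingEnd ℂ) l + c22 * l^2 * ((starRingEnd ℂ) l)^2 = 0) :
    c11 = 0 := by
  have h0 := h 0
  have h1 := h 1
  have hm1 := h (-1)
  have hi := h I
  have hmi := h (-I)
  have h2 := h 2
  have hm2 := h (-2)
  simp only [map_zero, map_one, map_neg, Complex.conj_I, map_ofNat] at h0 h1 hm1 hi hmi h2 hm2
  linear_combination (-(5:ℂ)/4)*h0 + (5/12)*h1 + (5/12)*hm1 + (1/4)*hi + (1/4)*hmi
    - (1/24)*h2 - (1/24)*hm2 + (((c11 - c02 - c20) + c22*(1 - Complex.I^2))/2) * Complex.I_sq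

lemma sum_mul_expand (f g h f' g' h' : S → ℂ) (l m : ℂ) :
    ∑ a, (f a + l * g a + l ^ 2 * h a) * (f' a + m * g' a + m ^ 2 * h' a)
      = (∑ a, f a * f' a) + (∑ a, f a * g' a) * m + (∑ a, f a * h' a) * m ^ 2
      + (∑ a, g a * f' a) * l + (∑ a, g a * g' a) * (l * m) + (∑ a, g a * h' a) * (l * m ^ 2)
      + (∑ a, h a * f' a) * l ^ 2 + (∑ a, h a * g' a) * (l ^ 2 * m)
      + (∑ a, h a * h' a) * (l ^ 2 * m ^ 2) := by
  simp only [Finset.sum_mul, ← Finset.sum_add_distrib]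
  apply Finset.sum_congr rfl; intros a _
  ring

end SOSR

open Complex Finset SOSR

namespace SOSR

lemma build_H {n : ℕ} (Afun : (Fin n → ℂ) → ℝ) (hC2 : ContDiff ℝ 2 Afun)
    (hhom : ∀ (t : ℝ) (X : Fin n → ℂ), Afun (t • X) = t ^ 2 * Afun X)
    (hIinv : ∀ X : Fin n → ℂ, Afun (Complex.I • X) = Afun X) :
    ∃ H : (Fin n → ℂ) → (Fin n → ℂ) → ℂ,
      (∀ X, H X X = ((Afun X : ℝ) : ℂ)) ∧
      (∀ X Y, (starRingEnd ℂ) (H X Y) = H Y X) ∧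
      (∀ X X' Y, H (X + X') Y = H X Y + H X' Y) ∧
      (∀ X Y Y', H X (Y + Y') = H X Y + H X Y') ∧
      (∀ (c : ℂ) X Y, H (c • X) Y = c * H X Y) ∧
      (∀ (c : ℂ) X Y, H X (c • Y) = (starRingEnd ℂ) c * H X Y) := by
  set f2 := fderiv ℝ (fderiv ℝ Afun) 0 with hf2def
  have hkey : ∀ X : Fin n → ℂ, f2 X X = 2 * Afun X := quadratic_part Afun hC2 hhom
  set Bs : (Fin n → ℂ) → (Fin n → ℂ) → ℝ := fun X Y => (f2 X Y + f2 Y X) / 4 with hBsdef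
  have hBssymm : ∀ X Y, Bs X Y = Bs Y X := by intro X Y; simp only [hBsdef]; ring
  have hBsdiag : ∀ X, Bs X X = Afun X := by
    intro X; simp only [hBsdef]; rw [hkey X]; ring
  have hBsaddl : ∀ X X' Y, Bs (X + X') Y = Bs X Y + Bs X' Y := by
    intro X X' Y
    simp only [hBsdef, map_add, ContinuousLinearMap.add_apply]
    ring
  have hBsaddr : ∀ X Y Y', Bs X (Y + Y') = Bs X Y + Bs X Y' := by
    intro X Y Y'
    rw [hBssymm, hBsaddl, hBssymm Y X, hBssymm Y' X]
  have hBssmull : ∀ (r : ℝ) X Y, Bs (r • X) Y = r * Bs X Y := by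
    intro r X Y
    simp only [hBsdef, map_smul, ContinuousLinearMap.smul_apply, smul_eq_mul]
    ring
  have hBssmulr : ∀ (r : ℝ) X Y, Bs X (r • Y) = r * Bs X Y := by
    intro r X Y
    rw [hBssymm, hBssmull, hBssymm Y X]
  have hBsnegr : ∀ X Y, Bs X (-Y) = -Bs X Y := by
    intro X Y
    have := hBssmulr (-1) X Y
    simpa using this
  have hBsformula : ∀ X Y, Bs X Y = (Afun (X + Y) - Afun X - Afun Y) / 2 := by
    intro X Y
    have h1 : Bs (X + Y) (X + Y) = Bs X X + Bs X Y + Bs Y X + Bs Y Y := by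
      rw [hBsaddl, hBsaddr, hBsaddr]
      ring
    rw [hBsdiag, hBsdiag, hBsdiag, hBssymm Y X] at h1
    linarith [h1]
  have hBsI : ∀ X Y, Bs (Complex.I • X) (Complex.I • Y) = Bs X Y := by
    intro X Y
    rw [hBsformula, hBsformula, ← smul_add, hIinv, hIinv, hIinv]
  have hBsIl : ∀ X Y, Bs (Complex.I • X) Y = -Bs X (Complex.I • Y) := by
    intro X Y
    have h1 := hBsI X (Complex.I • Y)
    rw [smul_smul, Complex.I_mul_I, neg_one_smul, hBsnegr] at h1
    linarith [h1]
  have hBsXiX : ∀ X, Bs X (Complex.I • X) = 0 := by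
    intro X
    have h1 := hBsIl X X
    rw [hBssymm (Complex.I • X) X] at h1
    linarith [h1]
  set H : (Fin n → ℂ) → (Fin n → ℂ) → ℂ :=
    fun X Y => (Bs X Y : ℂ) + Complex.I * (Bs X (Complex.I • Y) : ℂ) with hHdef
  have hHdiag : ∀ X, H X X = ((Afun X : ℝ) : ℂ) := by
    intro X; simp only [hHdef, hBsXiX, hBsdiag]; simp
  have hHconj : ∀ X Y, (starRingEnd ℂ) (H X Y) = H Y X := by
    intro X Y
    simp only [hHdef, map_add, map_mul, Complex.conj_ofReal, Complex.conj_I]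
    rw [hBssymm X Y, hBssymm X (Complex.I • Y), hBsIl Y X]
    push_cast; ring
  have hHaddl : ∀ X X' Y, H (X + X') Y = H X Y + H X' Y := by
    intro X X' Y
    simp only [hHdef, hBsaddl]
    push_cast; ring
  have hHaddr : ∀ X Y Y', H X (Y + Y') = H X Y + H X Y' := by
    intro X Y Y'
    simp only [hHdef, smul_add, hBsaddr]
    push_cast; ring
  have hHsmulRl : ∀ (r : ℝ) X Y, H (r • X) Y = (r : ℂ) * H X Y := by
    intro r X Y
    simp only [hHdef, hBssmull]
    push_cast; ring
  have hHsmulRr : ∀ (r : ℝ) X Y, H X (r • Y) = (r : ℂ) * H X Y := by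
    intro r X Y
    have hsw : Complex.I • (r • Y) = r • (Complex.I • Y) := smul_comm _ _ _
    simp only [hHdef, hsw, hBssmulr]
    push_cast; ring
  have hHIl : ∀ X Y, H (Complex.I • X) Y = Complex.I * H X Y := by
    intro X Y
    simp only [hHdef]
    rw [hBsIl X Y, hBsI X Y]
    push_cast
    linear_combination (-((Bs X (Complex.I • Y) : ℝ) : ℂ)) * Complex.I_sq
  have hHIr : ∀ X Y, H X (Complex.I • Y) = -Complex.I * H X Y := by
    intro X Y
    simp only [hHdef]
    rw [smul_smul, Complex.I_mul_I, neg_one_smul, hBsnegr]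
    push_cast
    linear_combination ((Bs X (Complex.I • Y) : ℝ) : ℂ) * Complex.I_sq
  have hdec : ∀ (c : ℂ) (X : Fin n → ℂ), c • X = c.re • X + c.im • (Complex.I • X) := by
    intro c X
    funext α
    simp only [Pi.add_apply, Pi.smul_apply, smul_eq_mul, Complex.real_smul]
    linear_combination (X α) * (Complex.re_add_im c).symm
  have hHsmulCl : ∀ (c : ℂ) X Y, H (c • X) Y = c * H X Y := by
    intro c X Y
    rw [hdec c X, hHaddl, hHsmulRl, hHsmulRl, hHIl]
    linear_combination (H X Y) * (Complex.re_add_im c)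
  have hconjc : ∀ c : ℂ, (starRingEnd ℂ) c = (c.re : ℂ) - (c.im : ℂ) * Complex.I := by
    intro c
    apply Complex.ext <;> simp
  have hHsmulCr : ∀ (c : ℂ) X Y, H X (c • Y) = (starRingEnd ℂ) c * H X Y := by
    intro c X Y
    rw [hdec c Y, hHaddr, hHsmulRr, hHsmulRr, hHIr, hconjc c]
    ring
  exact ⟨H, hHdiag, hHconj, hHaddl, hHaddr, hHsmulCl, hHsmulCr⟩

end SOSR

open Complex Finset SOSR

namespace SOSR

lemma shuffle (p00 p01 p02 p10 p11 p12 p20 p21 p22 g00 g01 g10 g11 h00 h01 h10 h11 l lb : ℂ)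
    (h : p00 + p01 * lb + p02 * lb ^ 2 + p10 * l + p11 * (l * lb) + p12 * (l * lb ^ 2)
        + p20 * l ^ 2 + p21 * (l ^ 2 * lb) + p22 * (l ^ 2 * lb ^ 2)
      = (g00 + lb * g01 + l * g10 + l * lb * g11) * (h00 + lb * h01 + l * h10 + l * lb * h11)) :
    (p00 - g00 * h00)
    + (p01 - (g00 * h01 + g01 * h00)) * lb
    + (p02 - g01 * h01) * lb ^ 2
    + (p10 - (g00 * h10 + g10 * h00)) * l
    + (p11 - (g00 * h11 + g10 * h01 + g01 * h10 + g11 * h00)) * l * lb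
    + (p12 - (g01 * h11 + g11 * h01)) * l * lb ^ 2
    + (p20 - g10 * h10) * l ^ 2
    + (p21 - (g10 * h11 + g11 * h10)) * l ^ 2 * lb
    + (p22 - g11 * h11) * l ^ 2 * lb ^ 2 = 0 := by
  linear_combination h

set_option maxHeartbeats 1000000 in
lemma star_identity {n : ℕ} {S : Type*} [Fintype S] (A : S → Fin n → Fin n → ℂ)
    (H : (Fin n → ℂ) → (Fin n → ℂ) → ℂ)
    (hHaddl : ∀ X X' Y, H (X + X') Y = H X Y + H X' Y)
    (hHaddr : ∀ X Y Y', H X (Y + Y') = H X Y + H X Y')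
    (hHsmulCl : ∀ (c : ℂ) X Y, H (c • X) Y = c * H X Y)
    (hHsmulCr : ∀ (c : ℂ) X Y, H X (c • Y) = (starRingEnd ℂ) c * H X Y)
    (hcreal : ∀ X : Fin n → ℂ,
      (∑ a, Qf A a X * (starRingEnd ℂ) (Qf A a X)) = ipc X X * H X X)
    (v w : Fin n → ℂ) :
    (∑ a, Rf A a v w * (starRingEnd ℂ) (Rf A a v w))
      = ipc v v * H w w + ipc w v * H v w + ipc v w * H w v + ipc w w * H v v := by
  have hHexp : ∀ l : ℂ, H (v + l • w) (v + l • w)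
      = H v v + (starRingEnd ℂ) l * H v w + l * H w v + l * (starRingEnd ℂ) l * H w w := by
    intro l
    rw [hHaddl, hHaddr, hHaddr, hHsmulCl, hHsmulCl, hHsmulCr, hHsmulCr]
    ring
  have hipcexp : ∀ l : ℂ, ipc (v + l • w) (v + l • w)
      = ipc v v + (starRingEnd ℂ) l * ipc v w + l * ipc w v + l * (starRingEnd ℂ) l * ipc w w := by
    intro l
    rw [ipc_add_left, ipc_add_right, ipc_add_right, ipc_smul_left, ipc_smul_left,
      ipc_smul_right, ipc_smul_right]
    ring
  have hD : ∀ l : ℂ,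
      ((∑ a, Qf A a v * (starRingEnd ℂ) (Qf A a v)) - ipc v v * H v v)
      + ((∑ a, Qf A a v * (starRingEnd ℂ) (Rf A a v w)) - (ipc v v * H v w + ipc v w * H v v)) * (starRingEnd ℂ) l
      + ((∑ a, Qf A a v * (starRingEnd ℂ) (Qf A a w)) - ipc v w * H v w) * ((starRingEnd ℂ) l)^2
      + ((∑ a, Rf A a v w * (starRingEnd ℂ) (Qf A a v)) - (ipc v v * H w v + ipc w v * H v v)) * l
      + ((∑ a, Rf A a v w * (starRingEnd ℂ) (Rf A a v w))
          - (ipc v v * H w w + ipc w v * H v w + ipc v w * H w v + ipc w w * H v v)) * l * (starRingEnd ℂ) l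
      + ((∑ a, Rf A a v w * (starRingEnd ℂ) (Qf A a w)) - (ipc v w * H w w + ipc w w * H v w)) * l * ((starRingEnd ℂ) l)^2
      + ((∑ a, Qf A a w * (starRingEnd ℂ) (Qf A a v)) - ipc w v * H w v) * l^2
      + ((∑ a, Qf A a w * (starRingEnd ℂ) (Rf A a v w)) - (ipc w v * H w w + ipc w w * H w v)) * l^2 * (starRingEnd ℂ) l
      + ((∑ a, Qf A a w * (starRingEnd ℂ) (Qf A a w)) - ipc w w * H w w) * l^2 * ((starRingEnd ℂ) l)^2 = 0 := by
    intro l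
    have h := hcreal (v + l • w)
    have hL : (∑ a, Qf A a (v + l • w) * (starRingEnd ℂ) (Qf A a (v + l • w)))
        = ∑ a, (Qf A a v + l * Rf A a v w + l ^ 2 * Qf A a w)
            * ((starRingEnd ℂ) (Qf A a v) + (starRingEnd ℂ) l * (starRingEnd ℂ) (Rf A a v w)
              + ((starRingEnd ℂ) l) ^ 2 * (starRingEnd ℂ) (Qf A a w)) := by
      apply Finset.sum_congr rfl; intros a _
      rw [Qf_expand]
      congr 1
      rw [map_add, map_add, map_mul, map_mul, map_pow]
    rw [hL, sum_mul_expand, hipcexp l, hHexp l] at h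
    exact shuffle _ _ _ _ _ _ _ _ _ _ _ _ _ _ _ _ _ _ _ h
  have hc11 := core_nine _ _ _ _ _ _ _ _ _ hD
  exact sub_eq_zero.mp hc11

end SOSR

open Complex Finset SOSR

namespace SOSR

lemma hermCS_step (z2 d bb H1 H2 : ℂ) (hd : d ≠ 0) (hzz : z2 * (starRingEnd ℂ) z2 = bb)
    (hexp : H1 = H2 + (starRingEnd ℂ) (-((starRingEnd ℂ) z2 / d)) * (starRingEnd ℂ) z2
      + (-((starRingEnd ℂ) z2 / d)) * z2
      + (-((starRingEnd ℂ) z2 / d)) * (starRingEnd ℂ) (-((starRingEnd ℂ) z2 / d)) * d)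
    (hcd : (starRingEnd ℂ) d = d) :
    H1 = H2 - bb / d := by
  rw [hexp, map_neg, map_div₀, Complex.conj_conj, hcd]
  field_simp
  linear_combination -hzz

set_option maxHeartbeats 2000000 in
lemma afun_vanishes {n : ℕ} {S : Type*} [Fintype S] (hn : 2 ≤ n)
    (hcard : Fintype.card S ≤ n - 1)
    (A : S → Fin n → Fin n → ℂ) (Afun : (Fin n → ℂ) → ℝ)
    (H : (Fin n → ℂ) → (Fin n → ℂ) → ℂ)
    (hrealQ : ∀ X : Fin n → ℂ,
      (∑ a, Complex.normSq (Qf A a X)) = (∑ α, Complex.normSq (X α)) * Afun X)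
    (hA0 : Afun 0 = 0)
    (hpos : ∀ X, 0 ≤ Afun X)
    (hHdiag : ∀ X, H X X = ((Afun X : ℝ) : ℂ))
    (hHconj : ∀ X Y, (starRingEnd ℂ) (H X Y) = H Y X)
    (hHaddl : ∀ X X' Y, H (X + X') Y = H X Y + H X' Y)
    (hHaddr : ∀ X Y Y', H X (Y + Y') = H X Y + H X Y')
    (hHsmulCl : ∀ (c : ℂ) X Y, H (c • X) Y = c * H X Y)
    (hHsmulCr : ∀ (c : ℂ) X Y, H X (c • Y) = (starRingEnd ℂ) c * H X Y)
    (hstar : ∀ v w : Fin n → ℂ,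
      (∑ a, Rf A a v w * (starRingEnd ℂ) (Rf A a v w))
        = ipc v v * H w w + ipc w v * H v w + ipc v w * H w v + ipc w w * H v v) :
    ∀ X : Fin n → ℂ, Afun X = 0 := by
  by_contra hcon
  push_neg at hcon
  obtain ⟨v, hv0⟩ := hcon
  have hva : 0 < Afun v := lt_of_le_of_ne (hpos v) (Ne.symm hv0)
  have hvne : v ≠ 0 := by
    intro h; rw [h, hA0] at hv0; exact hv0 rfl
  set T : (Fin n → ℂ) →ₗ[ℂ] (S → ℂ) :=
    { toFun := fun w a => Rf A a v w
      map_add' := by intro w w'; funext a; exact Rf_add_right A a v w w'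
      map_smul' := by intro c w; funext a; simp [Rf_smul_right] } with hTdef
  have hker : LinearMap.ker T ≠ ⊥ := by
    intro hbot
    have h1 := LinearMap.finrank_range_add_finrank_ker T
    have h2 : Module.finrank ℂ (Fin n → ℂ) = n := by simp
    have h3 : Module.finrank ℂ ↥(LinearMap.range T) ≤ Fintype.card S := by
      have h4 : Module.finrank ℂ (S → ℂ) = Fintype.card S := by simp
      calc Module.finrank ℂ ↥(LinearMap.range T) ≤ Module.finrank ℂ (S → ℂ) :=
            Submodule.finrank_le _
        _ = Fintype.card S := h4
    rw [hbot, finrank_bot, h2] at h1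
    omega
  obtain ⟨w, hwker, hwne⟩ := Submodule.exists_mem_ne_zero_of_ne_bot hker
  have hw : ∀ a, Rf A a v w = 0 := by
    intro a
    have := LinearMap.mem_ker.mp hwker
    exact congrFun this a
  have hst := hstar v w
  rw [show (∑ a, Rf A a v w * (starRingEnd ℂ) (Rf A a v w)) = 0 by
    apply Finset.sum_eq_zero; intros a _; rw [hw a]; ring] at hst
  set sv : ℝ := ∑ α, Complex.normSq (v α) with hsvdef
  set sw : ℝ := ∑ α, Complex.normSq (w α) with hswdef
  have hsv : 0 < sv := sum_normSq_pos v hvne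
  have hsw : 0 < sw := sum_normSq_pos w hwne
  set b : ℝ := Afun w with hbdef
  have hb : 0 ≤ b := hpos w
  set z1 : ℂ := ipc w v with hz1def
  set z2 : ℂ := H v w with hz2def
  have hconjrel : ipc v w * H w v = (starRingEnd ℂ) (z1 * z2) := by
    rw [map_mul, hz1def, hz2def, ipc_conj, hHconj]
  have hreq : sv * b + sw * Afun v + 2 * (z1 * z2).re = 0 := by
    rw [hconjrel, ipc_diag v, ipc_diag w, hHdiag w, hHdiag v, ← hsvdef, ← hswdef, ← hbdef] at hst
    have hadd := Complex.add_conj (z1 * z2)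
    have h1 : ((sv * b + sw * Afun v + 2 * (z1 * z2).re : ℝ) : ℂ) = 0 := by
      push_cast
      push_cast at hadd
      linear_combination -hst - hadd
    exact_mod_cast h1
  -- Cauchy-Schwarz for H
  have hHCS : Complex.normSq z2 ≤ Afun v * b := by
    set d : ℂ := ((Afun v : ℝ) : ℂ) with hddef
    set c : ℂ := -((starRingEnd ℂ) z2 / d) with hcdef
    have hAvne : d ≠ 0 := by
      simp only [hddef, ne_eq, Complex.ofReal_eq_zero]
      exact ne_of_gt hva
    have hz2conj : H w v = (starRingEnd ℂ) z2 := by rw [hz2def, hHconj]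
    have hexp : H (w + c • v) (w + c • v)
        = ((b : ℝ) : ℂ) + (starRingEnd ℂ) c * (starRingEnd ℂ) z2 + c * z2 + c * (starRingEnd ℂ) c * d := by
      rw [hHaddl, hHaddr, hHaddr, hHsmulCl, hHsmulCl, hHsmulCr, hHsmulCr,
        hHdiag w, hHdiag v, ← hbdef, hz2conj, ← hz2def, ← hddef]
      ring
    have hval : H (w + c • v) (w + c • v)
        = ((b : ℝ) : ℂ) - ((Complex.normSq z2 : ℝ) : ℂ) / d := by
      refine hermCS_step z2 d _ _ _ hAvne (Complex.mul_conj z2) ?_ ?_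
      · rw [← hcdef]; exact hexp
      · rw [hddef, Complex.conj_ofReal]
    have hge : 0 ≤ b - Complex.normSq z2 / Afun v := by
      have h5 : H (w + c • v) (w + c • v) = ((Afun (w + c • v) : ℝ) : ℂ) := hHdiag _
      rw [hval, hddef] at h5
      have h6 : b - Complex.normSq z2 / Afun v = Afun (w + c • v) := by
        have h7 := congrArg Complex.re h5
        push_cast at h7
        simpa using h7
      rw [h6]
      exact hpos _
    have h8 : Complex.normSq z2 / Afun v ≤ b := by linarith
    calc Complex.normSq z2 = (Complex.normSq z2 / Afun v) * Afun v := by field_simp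
      _ ≤ b * Afun v := by nlinarith [hva]
      _ = Afun v * b := by ring
  have hCS := ipc_cs v w hvne
  have hb1 : Complex.normSq z1 ≤ sw * sv := hCS.1
  have hre2 : ((z1 * z2).re) ^ 2 ≤ Complex.normSq z1 * Complex.normSq z2 := by
    have h7 : Complex.normSq (z1 * z2) = Complex.normSq z1 * Complex.normSq z2 :=
      Complex.normSq_mul z1 z2
    rw [← h7, Complex.normSq_apply]
    nlinarith [sq_nonneg ((z1*z2).im)]
  have hq2 : 0 ≤ Complex.normSq z2 := Complex.normSq_nonneg z2
  have hq1 : 0 ≤ Complex.normSq z1 := Complex.normSq_nonneg z1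
  have hprod : Complex.normSq z1 * Complex.normSq z2 ≤ (sw * sv) * (Afun v * b) :=
    mul_le_mul hb1 hHCS hq2 (le_of_lt (by positivity))
  have he : sv * b + sw * Afun v = -(2 * (z1 * z2).re) := by linarith [hreq]
  have hA : (sv * b + sw * Afun v) ^ 2 ≤ 4 * ((sw * sv) * (Afun v * b)) := by
    calc (sv * b + sw * Afun v) ^ 2 = 4 * ((z1 * z2).re) ^ 2 := by rw [he]; ring
      _ ≤ 4 * (Complex.normSq z1 * Complex.normSq z2) := by linarith [hre2]
      _ ≤ 4 * ((sw * sv) * (Afun v * b)) := by linarith [hprod]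
  have hsvb : sv * b = sw * Afun v := by
    nlinarith [hA, sq_nonneg (sv * b - sw * Afun v)]
  have hbpos : 0 < b := by nlinarith [hsvb, hsv, hsw, hva, hb]
  have hre_eq : (z1 * z2).re = -(sv * b) := by linarith [he, hsvb]
  have e2 : ((z1 * z2).re) ^ 2 = (sw * sv) * (Afun v * b) := by
    rw [hre_eq]
    linear_combination (sv * b) * hsvb
  have hPQ : Complex.normSq z1 * Complex.normSq z2 = (sw * sv) * (Afun v * b) := by
    apply le_antisymm hprod
    rw [← e2]
    exact hre2
  have hq2pos : 0 < Complex.normSq z2 := by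
    rcases lt_or_eq_of_le hq2 with h | h
    · exact h
    · exfalso
      rw [← h, mul_zero] at hPQ
      nlinarith [hPQ, mul_pos (mul_pos hsw hsv) (mul_pos hva hbpos)]
  have heq1 : Complex.normSq z1 = sw * sv := by
    have hx : (sw * sv) * Complex.normSq z2 ≤ (sw * sv) * (Afun v * b) :=
      mul_le_mul_of_nonneg_left hHCS (le_of_lt (mul_pos hsw hsv))
    have hy : (sw * sv) * Complex.normSq z2 ≤ Complex.normSq z1 * Complex.normSq z2 := by
      rw [hPQ]; exact hx
    have hz : sw * sv ≤ Complex.normSq z1 := le_of_mul_le_mul_right hy hq2pos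
    exact le_antisymm hb1 hz
  obtain ⟨c, hc⟩ := hCS.2 heq1
  have hcne : c ≠ 0 := by
    intro h; rw [h, zero_smul] at hc; exact hwne hc
  have hQv : ∀ a, Qf A a v = 0 := by
    intro a
    have h8 := hw a
    rw [hc, Rf_smul_right, Rf_diag] at h8
    have h9 := mul_eq_zero.mp h8
    rcases h9 with h9 | h9
    · exact absurd h9 hcne
    · have h10 := mul_eq_zero.mp h9
      rcases h10 with h10 | h10
      · norm_num at h10
      · exact h10
  have hFv : (∑ a, Complex.normSq (Qf A a v)) = 0 := by
    apply Finset.sum_eq_zero; intros a _; rw [hQv a]; simp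
  have h11 := hrealQ v
  rw [hFv, ← hsvdef] at h11
  nlinarith [h11, hsv, hva]

end SOSR

open Complex Finset SOSR

set_option maxHeartbeats 1000000 in
/-- Huang's rigidity lemma applied to a sum of squares of quadratic forms. -/
theorem sum_of_squares_rigidity (n : ℕ) (hn : 2 ≤ n) (S : Type*) [Fintype S]
    (hcard : Fintype.card S ≤ n - 1)
    (A : S → Fin n → Fin n → ℂ) (hsym : ∀ a α β, A a α β = A a β α)
    (Afun : (Fin n → ℂ) → ℝ) (hAfun : AnalyticOn ℝ Afun Set.univ)
    (hreal : ∀ X : Fin n → ℂ,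
      (∑ a, Complex.normSq (∑ α, ∑ β, A a α β * X α * X β) : ℝ) =
        (∑ α, Complex.normSq (X α)) * Afun X) :
    ∀ a α β, A a α β = 0 := by
  have hrealQ : ∀ X : Fin n → ℂ,
      (∑ a, Complex.normSq (Qf A a X)) = (∑ α, Complex.normSq (X α)) * Afun X := hreal
  have hOnNhd : AnalyticOnNhd ℝ Afun Set.univ := by rw [← analyticOn_univ]; exact hAfun
  have hC2 : ContDiff ℝ 2 Afun := by
    rw [← contDiffOn_univ]; exact hOnNhd.contDiffOn (n := 2) uniqueDiffOn_univ
  have hFscale : ∀ (c : ℂ) (X : Fin n → ℂ),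
      (∑ a, Complex.normSq (Qf A a (c • X))) = (Complex.normSq c) ^ 2 * ∑ a, Complex.normSq (Qf A a X) := by
    intro c X
    rw [Finset.mul_sum]
    apply Finset.sum_congr rfl; intro a _
    rw [Qf_smul, Complex.normSq_mul, pow_two c, Complex.normSq_mul]; ring
  have hrsmul : ∀ (t : ℝ) (X : Fin n → ℂ), t • X = (t : ℂ) • X := by
    intro t X; funext α; simp [Complex.real_smul]
  have hssum : ∀ (c : ℂ) (X : Fin n → ℂ),
      (∑ α, Complex.normSq ((c • X) α)) = Complex.normSq c * ∑ α, Complex.normSq (X α) := by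
    intro c X
    rw [Finset.mul_sum]
    apply Finset.sum_congr rfl; intro α _
    simp [Complex.normSq_mul]
  have hpart : ∀ (t : ℝ), t ≠ 0 → ∀ X : Fin n → ℂ, X ≠ 0 → Afun (t • X) = t ^ 2 * Afun X := by
    intro t ht X hX
    have h1 := hrealQ ((t:ℝ) • X)
    rw [hrsmul t X] at h1
    rw [hFscale, hssum, hrealQ X] at h1
    have hns : Complex.normSq (t : ℂ) = t ^ 2 := by
      rw [Complex.normSq_ofReal]; ring
    rw [hns] at h1
    have hs := sum_normSq_pos X hX
    have ht2 : (0:ℝ) < t ^ 2 := by positivity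
    have h2 : t ^ 2 * ((∑ α, Complex.normSq (X α)) * Afun ((t:ℂ) • X))
        = t ^ 2 * ((∑ α, Complex.normSq (X α)) * (t ^ 2 * Afun X)) := by
      nlinarith [h1]
    have h3 := mul_left_cancel₀ (ne_of_gt ht2) h2
    have h4 := mul_left_cancel₀ (ne_of_gt hs) h3
    rw [hrsmul t X]; exact h4
  have hnpos : 0 < n := by omega
  have hA0 : Afun 0 = 0 := by
    set X0 : Fin n → ℂ := fun _ => 1 with hX0def
    have hX0 : X0 ≠ 0 := by
      intro h
      have := congrFun h ⟨0, hnpos⟩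
      simp [hX0def] at this
    have hcont : Continuous Afun := hC2.continuous
    have h1 : Filter.Tendsto (fun t : ℝ => Afun (t • X0)) (nhdsWithin 0 {(0:ℝ)}ᶜ) (nhds (Afun 0)) := by
      have hcomp : Continuous (fun t : ℝ => Afun (t • X0)) :=
        hcont.comp (continuous_id.smul continuous_const)
      have h2 := hcomp.tendsto 0
      rw [show (0:ℝ) • X0 = 0 by simp] at h2
      exact h2.mono_left nhdsWithin_le_nhds
    have h2 : Filter.Tendsto (fun t : ℝ => Afun (t • X0)) (nhdsWithin 0 {(0:ℝ)}ᶜ) (nhds 0) := by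
      have hcomp : Continuous (fun t : ℝ => t ^ 2 * Afun X0) :=
        (continuous_pow 2).mul continuous_const
      have h3 := (hcomp.tendsto 0).mono_left (nhdsWithin_le_nhds (s := {(0:ℝ)}ᶜ))
      rw [show (0:ℝ) ^ 2 * Afun X0 = 0 by ring] at h3
      refine Filter.Tendsto.congr' ?_ h3
      filter_upwards [self_mem_nhdsWithin] with t ht
      exact (hpart t ht X0 hX0).symm
    exact tendsto_nhds_unique h1 h2
  have hhom : ∀ (t : ℝ) (X : Fin n → ℂ), Afun (t • X) = t ^ 2 * Afun X := by
    intro t X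
    by_cases hX : X = 0
    · rw [hX, smul_zero, hA0]; ring
    by_cases ht : t = 0
    · rw [ht, zero_smul, hA0]; ring
    exact hpart t ht X hX
  have hIinv : ∀ X : Fin n → ℂ, Afun (Complex.I • X) = Afun X := by
    intro X
    by_cases hX : X = 0
    · rw [hX, smul_zero]
    have h1 := hrealQ (Complex.I • X)
    rw [hFscale, hssum, hrealQ X] at h1
    simp only [Complex.normSq_I, one_pow, one_mul] at h1
    have hs := sum_normSq_pos X hX
    exact (mul_left_cancel₀ (ne_of_gt hs) h1).symm
  have hpos : ∀ X : Fin n → ℂ, 0 ≤ Afun X := by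
    intro X
    by_cases hX : X = 0
    · rw [hX, hA0]
    have h1 := hrealQ X
    have hs := sum_normSq_pos X hX
    have hF : 0 ≤ ∑ a, Complex.normSq (Qf A a X) :=
      Finset.sum_nonneg fun _ _ => Complex.normSq_nonneg _
    nlinarith [h1, hs, hF]
  obtain ⟨H, hHdiag, hHconj, hHaddl, hHaddr, hHsmulCl, hHsmulCr⟩ :=
    build_H Afun hC2 hhom hIinv
  have hcreal : ∀ X : Fin n → ℂ,
      (∑ a, Qf A a X * (starRingEnd ℂ) (Qf A a X)) = ipc X X * H X X := by
    intro X
    rw [ipc_diag, hHdiag, ← Complex.ofReal_mul, ← hrealQ X, Complex.ofReal_sum]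
    apply Finset.sum_congr rfl; intros a _
    rw [Complex.mul_conj]
  have hstar := star_identity A H hHaddl hHaddr hHsmulCl hHsmulCr hcreal
  have hAf0 := afun_vanishes hn hcard A Afun H hrealQ hA0 hpos hHdiag hHconj
    hHaddl hHaddr hHsmulCl hHsmulCr hstar
  have hQ0 : ∀ (a : S) (X : Fin n → ℂ), Qf A a X = 0 := by
    intro a X
    have h1 := hrealQ X
    rw [hAf0 X, mul_zero] at h1
    have h2 := (Finset.sum_eq_zero_iff_of_nonneg
      (fun i _ => Complex.normSq_nonneg (Qf A i X))).mp h1 a (Finset.mem_univ a)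
    exact Complex.normSq_eq_zero.mp h2
  intro a α β
  have h3 := Qf_expand A a (fun δ => if δ = α then 1 else 0) (fun δ => if δ = β then 1 else 0) 1
  rw [hQ0 a _, hQ0 a _, hQ0 a _, Rf_basis] at h3
  rw [hsym a β α] at h3
  have h4 : (2:ℂ) * A a α β = 0 := by linear_combination -h3
  rcases mul_eq_zero.mp h4 with h5 | h5
  · norm_num at h5
  · exact h5
end

section
/- Let $N > n \ge 1$. Suppose $\hat R_{\alpha\bar\beta\mu\bar\nu}$ and $R_{\alpha\bar\beta\mu\bar\nu}$ ($1\le\alpha,\beta,\mu,\nu\le n$) are two tensors each pseudo-conformally flat with respect to positive definite Hermitian metrics $(\hat g_{\alpha\bar\beta})$ and $(g_{\alpha\bar\beta})$ respectively, where $\hat g_{\alpha\bar\beta} = c\, g_{\alpha\bar\beta}$ for some constant $c > 0$. Suppose moreover that $\hat R_{\alpha\bar\beta\mu\bar\nu} - R_{\alpha\bar\beta\mu\bar\nu} = \sum_{A,B=n+1}^N h^A_{\alpha\mu}\overline{h^B_{\beta\nu}}\,G_{A\bar B}$ for complex numbers $h^A_{\alpha\mu}$ symmetric in $\alpha,\mu$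 and a positive definite Hermitian matrix $(G_{A\bar B})$. If $N \le 2n-1$, then $h^A_{\alpha\mu} = 0$ for all $A,\alpha,\mu$. -/
/-- A tensor is pseudo-conformally flat with respect to a Hermitian metric `g` if it
decomposes as `H_{αβ̄}g_{μν̄} + Ĥ_{μβ̄}g_{αν̄} + H*_{αν̄}g_{μβ̄} + H̃_{μν̄}g_{αβ̄}`
with `H, Ĥ, H*, H̃` Hermitian. -/
def PseudoConformallyFlat {n : ℕ} (T : Fin n → Fin n → Fin n → Fin n → ℂ)
    (g : Fin n → Fin n → ℂ) : Prop :=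
  ∃ H Hhat Hstar Htilde : Fin n → Fin n → ℂ,
    (∀ α β, H α β = (starRingEnd ℂ) (H β α)) ∧
    (∀ α β, Hhat α β = (starRingEnd ℂ) (Hhat β α)) ∧
    (∀ α β, Hstar α β = (starRingEnd ℂ) (Hstar β α)) ∧
    (∀ α β, Htilde α β = (starRingEnd ℂ) (Htilde β α)) ∧
    ∀ α β μ ν, T α β μ ν =
      H α β * g μ ν + Hhat μ β * g α ν + Hstar α ν * g μ β + Htilde μ ν * g α β

/-! ### Auxiliary machinery -/

/-- The sesquilinear form associated to a matrix. -/
noncomputable def qf {k : ℕ} (M : Fin k → Fin k → ℂ) (x y : Fin k → ℂ) : ℂ :=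
  ∑ i, ∑ j, M i j * x i * (starRingEnd ℂ) (y j)

section qfLemmas

variable {k : ℕ} {M : Fin k → Fin k → ℂ}

lemma qf_conj (hM : ∀ i j, M i j = (starRingEnd ℂ) (M j i)) (x y : Fin k → ℂ) :
    (starRingEnd ℂ) (qf M x y) = qf M y x := by
  simp only [qf, map_sum, map_mul, Complex.conj_conj]
  rw [Finset.sum_comm]
  refine Finset.sum_congr rfl fun j _ => Finset.sum_congr rfl fun i _ => ?_
  rw [← hM j i]; ring

lemma qf_real (hM : ∀ i j, M i j = (starRingEnd ℂ) (M j i)) (x : Fin k → ℂ) :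
    qf M x x = ((qf M x x).re : ℂ) := by
  have := qf_conj hM x x
  exact (Complex.conj_eq_iff_re.mp this).symm

lemma qf_zero_left (y : Fin k → ℂ) : qf M 0 y = 0 := by simp [qf]

lemma qf_expand (r s : ℂ) (u v : Fin k → ℂ) :
    qf M (fun i => r * u i + s * v i) (fun i => r * u i + s * v i) =
      r * (starRingEnd ℂ) r * qf M u u + r * (starRingEnd ℂ) s * qf M u v +
      s * (starRingEnd ℂ) r * qf M v u + s * (starRingEnd ℂ) s * qf M v v := by
  simp only [qf, map_add, map_mul, Finset.mul_sum, ← Finset.sum_add_distrib]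
  refine Finset.sum_congr rfl fun i _ => Finset.sum_congr rfl fun j _ => ?_
  ring

lemma qf_cs (hM : ∀ i j, M i j = (starRingEnd ℂ) (M j i))
    (hpsd : ∀ u, 0 ≤ (qf M u u).re) (u v : Fin k → ℂ) (hv : 0 < (qf M v v).re) :
    Complex.normSq (qf M u v) ≤ (qf M u u).re * (qf M v v).re := by
  set c : ℝ := (qf M v v).re with hc
  set d : ℂ := qf M u v with hd
  have hvv : qf M v v = (c : ℂ) := qf_real hM v
  have hvu : qf M v u = (starRingEnd ℂ) d := by rw [hd, ← qf_conj hM u v]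
  have hw := hpsd (fun i => (c : ℂ) * u i + (-d) * v i)
  rw [qf_expand] at hw
  have hval : (c:ℂ) * (starRingEnd ℂ) (c:ℂ) * qf M u u + (c:ℂ) * (starRingEnd ℂ) (-d) * qf M u v +
      (-d) * (starRingEnd ℂ) (c:ℂ) * qf M v u + (-d) * (starRingEnd ℂ) (-d) * qf M v v
      = (c:ℂ)^2 * qf M u u - (c:ℂ) * (Complex.normSq d : ℂ) := by
    rw [hvv, hvu, ← hd, Complex.conj_ofReal, map_neg,
      show ((Complex.normSq d : ℝ):ℂ) = d * (starRingEnd ℂ) d from (Complex.mul_conj d).symm]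
    ring
  rw [hval] at hw
  have huu : qf M u u = (((qf M u u).re : ℝ) : ℂ) := qf_real hM u
  rw [huu] at hw
  rw [show ((c:ℂ))^2 * (((qf M u u).re : ℝ) : ℂ) - (c:ℂ) * (Complex.normSq d : ℂ)
      = ((c^2 * (qf M u u).re - c * Complex.normSq d : ℝ) : ℂ) by push_cast; ring] at hw
  rw [Complex.ofReal_re] at hw
  nlinarith [hv, hw]

end qfLemmas

lemma sum_comm3 {I J K : Type*} [Fintype I] [Fintype J] [Fintype K] (f : I → J → K → ℂ) :
    ∑ a, ∑ b, ∑ c, f a b c = ∑ c, ∑ a, ∑ b, f a b c :=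
  calc ∑ a, ∑ b, ∑ c, f a b c = ∑ a, ∑ c, ∑ b, f a b c :=
        Finset.sum_congr rfl fun _ _ => Finset.sum_comm
  _ = ∑ c, ∑ a, ∑ b, f a b c := Finset.sum_comm

lemma swap3 {I : Type*} [Fintype I] (f : I → I → I → ℂ) :
    ∑ a, ∑ b, ∑ c, f a b c = ∑ c, ∑ b, ∑ a, f a b c :=
  calc ∑ a, ∑ b, ∑ c, f a b c = ∑ b, ∑ a, ∑ c, f a b c := Finset.sum_comm
  _ = ∑ b, ∑ c, ∑ a, f a b c := Finset.sum_congr rfl fun _ _ => Finset.sum_comm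
  _ = ∑ c, ∑ b, ∑ a, f a b c := Finset.sum_comm

lemma swap4 {I : Type*} [Fintype I] (f : I → I → I → I → ℂ) :
    ∑ a, ∑ b, ∑ c, ∑ d, f a b c d = ∑ c, ∑ b, ∑ a, ∑ d, f a b c d :=
  calc ∑ a, ∑ b, ∑ c, ∑ d, f a b c d = ∑ b, ∑ a, ∑ c, ∑ d, f a b c d := Finset.sum_comm
  _ = ∑ b, ∑ c, ∑ a, ∑ d, f a b c d := Finset.sum_congr rfl fun _ _ => Finset.sum_comm
  _ = ∑ c, ∑ b, ∑ a, ∑ d, f a b c d := Finset.sum_comm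

lemma sum_push6 {m k : ℕ} (f : Fin m → Fin m → Fin k → Fin k → Fin k → Fin k → ℂ) :
    ∑ A, ∑ B, ∑ α, ∑ μ, ∑ β, ∑ ν, f A B α μ β ν
      = ∑ α, ∑ μ, ∑ β, ∑ ν, ∑ A, ∑ B, f A B α μ β ν :=
  calc ∑ A, ∑ B, ∑ α, ∑ μ, ∑ β, ∑ ν, f A B α μ β ν
      = ∑ α, ∑ A, ∑ B, ∑ μ, ∑ β, ∑ ν, f A B α μ β ν := sum_comm3 _
  _ = ∑ α, ∑ μ, ∑ A, ∑ B, ∑ β, ∑ ν, f A B α μ β ν :=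
      Finset.sum_congr rfl fun _ _ => sum_comm3 _
  _ = ∑ α, ∑ μ, ∑ β, ∑ A, ∑ B, ∑ ν, f A B α μ β ν :=
      Finset.sum_congr rfl fun _ _ => Finset.sum_congr rfl fun _ _ => sum_comm3 _
  _ = ∑ α, ∑ μ, ∑ β, ∑ ν, ∑ A, ∑ B, f A B α μ β ν :=
      Finset.sum_congr rfl fun _ _ => Finset.sum_congr rfl fun _ _ =>
        Finset.sum_congr rfl fun _ _ => sum_comm3 _

/-- The fundamental contraction identity. -/
lemma contract {k m : ℕ} (F g : Fin k → Fin k → ℂ) (G : Fin m → Fin m → ℂ)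
    (h : Fin m → Fin k → Fin k → ℂ)
    (key : ∀ α β μ ν, (∑ A, ∑ B, h A α μ * (starRingEnd ℂ) (h B β ν) * G A B) =
      F α β * g μ ν + F μ β * g α ν + F α ν * g μ β + F μ ν * g α β)
    (x y z w : Fin k → ℂ) :
    qf G (fun A => ∑ α, ∑ μ, h A α μ * x α * z μ) (fun B => ∑ β, ∑ ν, h B β ν * y β * w ν) =
      qf F x y * qf g z w + qf F z y * qf g x w + qf F x w * qf g z y + qf F z w * qf g x y := by
  have step1 : qf G (fun A => ∑ α, ∑ μ, h A α μ * x α * z μ)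
      (fun B => ∑ β, ∑ ν, h B β ν * y β * w ν)
      = ∑ A, ∑ B, ∑ α, ∑ μ, ∑ β, ∑ ν,
        (h A α μ * (starRingEnd ℂ) (h B β ν) * G A B) *
          (x α * (starRingEnd ℂ) (y β) * z μ * (starRingEnd ℂ) (w ν)) := by
    unfold qf
    refine Finset.sum_congr rfl fun A _ => Finset.sum_congr rfl fun B _ => ?_
    simp only [map_sum, map_mul, Finset.mul_sum, Finset.sum_mul]
    rw [swap4]
    refine Finset.sum_congr rfl fun α _ => ?_
    rw [swap3]
    refine Finset.sum_congr rfl fun μ _ => Finset.sum_congr rfl fun β _ => ?_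
    refine Finset.sum_congr rfl fun ν _ => ?_
    ring
  rw [step1, sum_push6]
  have step2 : ∀ α μ β ν, (∑ A, ∑ B,
      (h A α μ * (starRingEnd ℂ) (h B β ν) * G A B) *
        (x α * (starRingEnd ℂ) (y β) * z μ * (starRingEnd ℂ) (w ν)))
      = (F α β * g μ ν + F μ β * g α ν + F α ν * g μ β + F μ ν * g α β) *
        (x α * (starRingEnd ℂ) (y β) * z μ * (starRingEnd ℂ) (w ν)) := by
    intro α μ β ν
    rw [← key α β μ ν, Finset.sum_mul]
    refine Finset.sum_congr rfl fun A _ => ?_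
    rw [Finset.sum_mul]
  simp only [step2]
  have step3 : ∑ α, ∑ μ, ∑ β, ∑ ν,
      (F α β * g μ ν + F μ β * g α ν + F α ν * g μ β + F μ ν * g α β) *
        (x α * (starRingEnd ℂ) (y β) * z μ * (starRingEnd ℂ) (w ν))
      = ∑ α, ∑ β, ∑ μ, ∑ ν,
      (F α β * g μ ν + F μ β * g α ν + F α ν * g μ β + F μ ν * g α β) *
        (x α * (starRingEnd ℂ) (y β) * z μ * (starRingEnd ℂ) (w ν)) :=
    Finset.sum_congr rfl fun _ _ => Finset.sum_comm
  rw [step3]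
  have expand : ∀ {P Q : Fin k → Fin k → ℂ} (u v s t : Fin k → ℂ),
      qf P u v * qf Q s t = ∑ a, ∑ b, ∑ c, ∑ d,
        P a b * Q c d * (u a * (starRingEnd ℂ) (v b) * s c * (starRingEnd ℂ) (t d)) := by
    intro P Q u v s t
    unfold qf
    simp only [Finset.sum_mul, Finset.mul_sum]
    rw [swap4]
    refine Finset.sum_congr rfl fun a _ => ?_
    rw [swap3]
    refine Finset.sum_congr rfl fun b _ => Finset.sum_congr rfl fun c _ => ?_
    refine Finset.sum_congr rfl fun d _ => ?_
    ring
  rw [expand x y z w, expand z y x w, expand x w z y, expand z w x y]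
  have t2 : ∑ a, ∑ b, ∑ c, ∑ d,
      F a b * g c d * (z a * (starRingEnd ℂ) (y b) * x c * (starRingEnd ℂ) (w d))
      = ∑ α, ∑ β, ∑ μ, ∑ ν,
      F μ β * g α ν * (x α * (starRingEnd ℂ) (y β) * z μ * (starRingEnd ℂ) (w ν)) := by
    rw [swap4]
    refine Finset.sum_congr rfl fun α _ => Finset.sum_congr rfl fun β _ => ?_
    refine Finset.sum_congr rfl fun μ _ => Finset.sum_congr rfl fun ν _ => ?_
    ring
  have t3 : ∑ a, ∑ b, ∑ c, ∑ d,
      F a b * g c d * (x a * (starRingEnd ℂ) (w b) * z c * (starRingEnd ℂ) (y d))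
      = ∑ α, ∑ β, ∑ μ, ∑ ν,
      F α ν * g μ β * (x α * (starRingEnd ℂ) (y β) * z μ * (starRingEnd ℂ) (w ν)) := by
    refine Finset.sum_congr rfl fun α _ => ?_
    rw [swap3]
    refine Finset.sum_congr rfl fun β _ => Finset.sum_congr rfl fun μ _ => ?_
    refine Finset.sum_congr rfl fun ν _ => ?_
    ring
  have t4 : ∑ a, ∑ b, ∑ c, ∑ d,
      F a b * g c d * (z a * (starRingEnd ℂ) (w b) * x c * (starRingEnd ℂ) (y d))
      = ∑ α, ∑ β, ∑ μ, ∑ ν,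
      F μ ν * g α β * (x α * (starRingEnd ℂ) (y β) * z μ * (starRingEnd ℂ) (w ν)) := by
    rw [swap4]
    refine Finset.sum_congr rfl fun α _ => ?_
    rw [swap3]
    refine Finset.sum_congr rfl fun β _ => Finset.sum_congr rfl fun μ _ => ?_
    refine Finset.sum_congr rfl fun ν _ => ?_
    ring
  rw [t2, t3, t4]
  simp only [← Finset.sum_add_distrib]
  refine Finset.sum_congr rfl fun α _ => Finset.sum_congr rfl fun β _ => ?_
  refine Finset.sum_congr rfl fun μ _ => Finset.sum_congr rfl fun ν _ => ?_
  ring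

/-- Pointwise algebraic core of Theorem 1.2: the second fundamental form vanishes. -/
theorem conformal_pcf_rigidity (n N : ℕ) (hn : 1 ≤ n) (hnN : n < N) (hN : N ≤ 2 * n - 1)
    (g ghat : Fin n → Fin n → ℂ) (c : ℝ) (hc : 0 < c)
    (hghat : ∀ α β, ghat α β = (c : ℂ) * g α β)
    (hgHerm : ∀ α β, g α β = (starRingEnd ℂ) (g β α))
    (hgPos : ∀ v : Fin n → ℂ, v ≠ 0 →
      0 < (∑ α, ∑ β, g α β * v α * (starRingEnd ℂ) (v β)).re)
    (Rhat R : Fin n → Fin n → Fin n → Fin n → ℂ)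
    (hRhat : PseudoConformallyFlat Rhat ghat)
    (hR : PseudoConformallyFlat R g)
    (h : Fin (N - n) → Fin n → Fin n → ℂ)
    (hsym : ∀ A α μ, h A α μ = h A μ α)
    (G : Fin (N - n) → Fin (N - n) → ℂ)
    (hGHerm : ∀ A B, G A B = (starRingEnd ℂ) (G B A))
    (hGPos : ∀ v : Fin (N - n) → ℂ, v ≠ 0 →
      0 < (∑ A, ∑ B, G A B * v A * (starRingEnd ℂ) (v B)).re)
    (hGauss : ∀ α β μ ν, Rhat α β μ ν - R α β μ ν =
      ∑ A, ∑ B, h A α μ * (starRingEnd ℂ) (h B β ν) * G A B) :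
    ∀ A α μ, h A α μ = 0 := by
  obtain ⟨H1, H2, H3, H4, hH1, hH2, hH3, hH4, hRhat'⟩ := hRhat
  obtain ⟨K1, K2, K3, K4, hK1, hK2, hK3, hK4, hR'⟩ := hR
  set F : Fin n → Fin n → ℂ := fun α β =>
    ((c:ℂ) * (H1 α β + H2 α β + H3 α β + H4 α β)
      - (K1 α β + K2 α β + K3 α β + K4 α β)) / 4 with hFdef
  -- F is Hermitian
  have hFHerm : ∀ α β, F α β = (starRingEnd ℂ) (F β α) := by
    intro α β
    simp only [hFdef, map_div₀, map_sub, map_add, map_mul, Complex.conj_ofReal, map_ofNat]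
    rw [hH1 α β, hH2 α β, hH3 α β, hH4 α β, hK1 α β, hK2 α β, hK3 α β, hK4 α β]
  -- the decomposed Gauss difference
  have hT : ∀ α β μ ν, Rhat α β μ ν - R α β μ ν =
      ((c:ℂ) * H1 α β - K1 α β) * g μ ν + ((c:ℂ) * H2 μ β - K2 μ β) * g α ν +
      ((c:ℂ) * H3 α ν - K3 α ν) * g μ β + ((c:ℂ) * H4 μ ν - K4 μ ν) * g α β := by
    intro α β μ ν
    rw [hRhat' α β μ ν, hR' α β μ ν, hghat μ ν, hghat α ν, hghat μ β, hghat α β]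
    ring
  -- symmetrized key identity
  have key : ∀ α β μ ν, (∑ A, ∑ B, h A α μ * (starRingEnd ℂ) (h B β ν) * G A B) =
      F α β * g μ ν + F μ β * g α ν + F α ν * g μ β + F μ ν * g α β := by
    intro α β μ ν
    have q1 := (hGauss α β μ ν).symm.trans (hT α β μ ν)
    have q2 := (hGauss μ β α ν).symm.trans (hT μ β α ν)
    have q3 := (hGauss α ν μ β).symm.trans (hT α ν μ β)
    have q4 := (hGauss μ ν α β).symm.trans (hT μ ν α β)
    have r2 : (∑ A, ∑ B, h A μ α * (starRingEnd ℂ) (h B β ν) * G A B)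
        = ∑ A, ∑ B, h A α μ * (starRingEnd ℂ) (h B β ν) * G A B :=
      Finset.sum_congr rfl fun A _ => Finset.sum_congr rfl fun B _ => by rw [hsym A μ α]
    have r3 : (∑ A, ∑ B, h A α μ * (starRingEnd ℂ) (h B ν β) * G A B)
        = ∑ A, ∑ B, h A α μ * (starRingEnd ℂ) (h B β ν) * G A B :=
      Finset.sum_congr rfl fun A _ => Finset.sum_congr rfl fun B _ => by rw [hsym B ν β]
    have r4 : (∑ A, ∑ B, h A μ α * (starRingEnd ℂ) (h B ν β) * G A B)
        = ∑ A, ∑ B, h A α μ * (starRingEnd ℂ) (h B β ν) * G A B :=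
      Finset.sum_congr rfl fun A _ => Finset.sum_congr rfl fun B _ => by
        rw [hsym A μ α, hsym B ν β]
    rw [r2] at q2; rw [r3] at q3; rw [r4] at q4
    simp only [hFdef]
    linear_combination (q1 + q2 + q3 + q4) / 4
  -- positivity facts
  have hGpsd : ∀ u, 0 ≤ (qf G u u).re := by
    intro u
    by_cases hu : u = 0
    · simp [hu, qf]
    · exact le_of_lt (hGPos u hu)
  have hgq : ∀ v : Fin n → ℂ, v ≠ 0 → 0 < (qf g v v).re := fun v hv => hgPos v hv
  have hGq : ∀ v : Fin (N - n) → ℂ, v ≠ 0 → 0 < (qf G v v).re := fun v hv => hGPos v hv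
  -- the quadratic map
  set Φ : (Fin n → ℂ) → (Fin n → ℂ) → Fin (N - n) → ℂ :=
    fun x z A => ∑ α, ∑ μ, h A α μ * x α * z μ with hΦdef
  have hcontract : ∀ x y z w, qf G (Φ x z) (Φ y w) =
      qf F x y * qf g z w + qf F z y * qf g x w + qf F x w * qf g z y + qf F z w * qf g x y :=
    fun x y z w => contract F g G h key x y z w
  -- main claim: Φ x x = 0 for all x
  have hdiag : ∀ x : Fin n → ℂ, Φ x x = 0 := by
    intro x
    by_contra hΦx
    have hx0 : x ≠ 0 := by
      intro hx; apply hΦx; rw [hx]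
      funext A; simp [hΦdef]
    obtain ⟨a, hgxx⟩ : ∃ a : ℝ, qf g x x = (a:ℂ) := ⟨_, qf_real hgHerm x⟩
    have ha : 0 < a := by
      have := hgq x hx0; rwa [hgxx, Complex.ofReal_re] at this
    obtain ⟨f, hFxx⟩ : ∃ f : ℝ, qf F x x = (f:ℂ) := ⟨_, qf_real hFHerm x⟩
    have e1 := hcontract x x x x
    have hGxx : qf G (Φ x x) (Φ x x) = ((4*f*a : ℝ):ℂ) := by
      rw [e1, hFxx, hgxx]; push_cast; ring
    have hGxxpos : 0 < (qf G (Φ x x) (Φ x x)).re := hGq _ hΦx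
    rw [hGxx, Complex.ofReal_re] at hGxxpos
    have hf : 0 < f := by nlinarith only [hGxxpos, ha]
    -- kernel vector z
    set M : Matrix (Fin (N - n)) (Fin n) ℂ := Matrix.of (fun A μ => ∑ α, h A α μ * x α)
      with hMdef
    have hmn : N - n < n := by omega
    obtain ⟨z, hz0, hzker⟩ : ∃ z : Fin n → ℂ, z ≠ 0 ∧ M.mulVecLin z = 0 := by
      have hni : ¬ Function.Injective M.mulVecLin := by
        intro hinj
        have := LinearMap.finrank_le_finrank_of_injective hinj
        simp [Module.finrank_fintype_fun_eq_card] at this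
        omega
      obtain ⟨u, v, huv, hne⟩ := Function.not_injective_iff.mp hni
      exact ⟨u - v, sub_ne_zero.mpr hne, by rw [map_sub, huv, sub_self]⟩
    have hΦxz : Φ x z = 0 := by
      funext A
      have hA0 : M.mulVecLin z A = 0 := by rw [hzker]; rfl
      simp only [Pi.zero_apply]
      rw [← hA0]
      simp only [hΦdef, hMdef, Matrix.mulVecLin_apply, Matrix.mulVec, dotProduct,
        Matrix.of_apply]
      rw [Finset.sum_comm]
      simp only [Finset.sum_mul]
    obtain ⟨b, hgzz⟩ : ∃ b : ℝ, qf g z z = (b:ℂ) := ⟨_, qf_real hgHerm z⟩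
    have hb : 0 < b := by
      have := hgq z hz0; rwa [hgzz, Complex.ofReal_re] at this
    obtain ⟨e, hFzz⟩ : ∃ e : ℝ, qf F z z = (e:ℂ) := ⟨_, qf_real hFHerm z⟩
    have hgxz : qf g x z = (starRingEnd ℂ) (qf g z x) := (qf_conj hgHerm z x).symm
    have hFxz : qf F x z = (starRingEnd ℂ) (qf F z x) := (qf_conj hFHerm z x).symm
    obtain ⟨p, hpd⟩ : ∃ p : ℝ, Complex.normSq (qf g z x) = p := ⟨_, rfl⟩
    -- identity (i)
    have ei := hcontract x x z x
    rw [hΦxz, qf_zero_left, hFxx, hgxx] at ei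
    have ci : qf F z x * (a:ℂ) = -((f:ℂ) * qf g z x) := by linear_combination -ei/2
    have ci' : (starRingEnd ℂ) (qf F z x) * (a:ℂ)
        = -((f:ℂ) * (starRingEnd ℂ) (qf g z x)) := by
      have hcc := congrArg (starRingEnd ℂ) ci
      simpa [map_mul, map_neg, Complex.conj_ofReal] using hcc
    -- identity (ii)
    have eii := hcontract x x z z
    rw [hΦxz, qf_zero_left, hFxx, hgzz, hgxx, hgxz, hFxz, hFzz] at eii
    have hmulconj : qf g z x * (starRingEnd ℂ) (qf g z x) = ((p : ℝ) : ℂ) := by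
      rw [← hpd]; exact Complex.mul_conj _
    have cmain : ((f*a*b - 2*f*p + e*a^2 : ℝ) : ℂ) = 0 := by
      push_cast
      linear_combination (-(a:ℂ)) * eii - (starRingEnd ℂ) (qf g z x) * ci
        - (qf g z x) * ci' + 2*(f:ℂ) * hmulconj
    have rmain : f*a*b - 2*f*p + e*a^2 = 0 := Complex.ofReal_eq_zero.mp cmain
    -- identity (iii) and (iv)
    have eiii := hcontract z x z x
    have eiv := hcontract z z z z
    rw [hFzz, hgzz] at eiv
    -- Cauchy–Schwarz in the G-inner product
    have hxxre : (qf G (Φ x x) (Φ x x)).re = 4*f*a := by rw [hGxx, Complex.ofReal_re]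
    have hzzre : (qf G (Φ z z) (Φ z z)).re = 4*e*b := by
      rw [show qf G (Φ z z) (Φ z z) = ((4*e*b : ℝ):ℂ) by rw [eiv]; push_cast; ring,
        Complex.ofReal_re]
    have hcs := qf_cs hGHerm hGpsd (Φ z z) (Φ x x) (by rw [hxxre]; nlinarith only [hf, ha])
    rw [hxxre, hzzre] at hcs
    -- norm computation for (iii)
    have h1 : (a:ℂ) * qf G (Φ z z) (Φ x x) = ((-4*f : ℝ):ℂ) * (qf g z x)^2 := by
      push_cast
      rw [eiii]
      linear_combination 4 * (qf g z x) * ci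
    have h2 := congrArg Complex.normSq h1
    rw [Complex.normSq_mul, Complex.normSq_mul, Complex.normSq_ofReal, Complex.normSq_ofReal,
      map_pow, hpd] at h2
    -- conclude p = a*b
    have k1 : a^2 * Complex.normSq (qf G (Φ z z) (Φ x x)) ≤ a^2 * (4*e*b*(4*f*a)) :=
      mul_le_mul_of_nonneg_left hcs (sq_nonneg a)
    have hpnn : 0 ≤ p := hpd ▸ Complex.normSq_nonneg _
    have k2 : 16*f^2*p^2 ≤ 16*e*b*f*a^3 := by nlinarith only [k1, h2]
    have k2b : e*a^2 = 2*f*p - f*a*b := by linarith only [rmain]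
    have k2c : 16*e*b*f*a^3 = 16*b*f*a*(2*f*p - f*a*b) := by rw [← k2b]; ring
    have k4 : 16*f^2*(p - a*b)^2 ≤ 0 := by nlinarith only [k2, k2c]
    have k3 : (p - a*b)^2 ≤ 0 := by nlinarith only [k4, mul_pos hf hf]
    have hp : p = a*b := by
      have h5 : (p - a*b)^2 = 0 := le_antisymm k3 (sq_nonneg _)
      have h6 : p - a*b = 0 := by
        have := sq_eq_zero_iff.mp h5
        exact this
      linarith only [h6]
    -- equality case of Cauchy–Schwarz for g : z is proportional to x
    have hdc : qf g z x * (starRingEnd ℂ) (qf g z x) = (a:ℂ) * (b:ℂ) := by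
      rw [hmulconj, hp]; push_cast; ring
    have hww : qf g (fun i => (a:ℂ) * z i + (-(qf g z x)) * x i)
        (fun i => (a:ℂ) * z i + (-(qf g z x)) * x i) = 0 := by
      rw [qf_expand, hgzz, hgxx, hgxz]
      simp only [Complex.conj_ofReal, map_neg]
      linear_combination (-(a:ℂ)) * hdc
    have hwzero : (fun i => (a:ℂ) * z i + (-(qf g z x)) * x i) = 0 := by
      by_contra hne
      have hpos := hgq _ hne
      rw [hww] at hpos
      simp at hpos
    have hweq : ∀ i, (a:ℂ) * z i = qf g z x * x i := by
      intro i
      have hzi := congrFun hwzero i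
      simp only [Pi.zero_apply] at hzi
      linear_combination hzi
    have haC : (a:ℂ) ≠ 0 := Complex.ofReal_ne_zero.mpr ha.ne'
    have hd0 : qf g z x ≠ 0 := by
      intro h0
      apply hz0
      funext i
      have hzi := hweq i
      rw [h0, zero_mul] at hzi
      exact (mul_eq_zero.mp hzi).resolve_left haC
    apply hΦx
    funext A
    have hzeq : ∀ i, z i = (qf g z x / (a:ℂ)) * x i := by
      intro i
      rw [div_mul_eq_mul_div, eq_div_iff haC]
      linear_combination hweq i
    have hΦfactor : Φ x z A = (qf g z x / (a:ℂ)) * Φ x x A := by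
      simp only [hΦdef]
      rw [Finset.mul_sum]
      refine Finset.sum_congr rfl fun α' _ => ?_
      rw [Finset.mul_sum]
      refine Finset.sum_congr rfl fun μ' _ => ?_
      rw [hzeq μ']
      ring
    have hzero : (0:ℂ) = (qf g z x / (a:ℂ)) * Φ x x A := by
      rw [← hΦfactor, hΦxz]
      rfl
    have hfrac : qf g z x / (a:ℂ) ≠ 0 := div_ne_zero hd0 haC
    simp only [Pi.zero_apply]
    exact ((mul_eq_zero.mp hzero.symm).resolve_left hfrac)
  -- polarization: h = 0 from Φ x x = 0
  intro A α μ
  have single_eval : ∀ (i j : Fin n),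
      ∑ a, ∑ b, h A a b * (Pi.single i 1 : Fin n → ℂ) a * (Pi.single j 1 : Fin n → ℂ) b
        = h A i j := by
    intro i j
    simp [Pi.single_apply, mul_ite, ite_mul, Finset.sum_ite_eq', mul_one, mul_zero, zero_mul]
  have hdd : ∀ i : Fin n, h A i i = 0 := by
    intro i
    have := congrFun (hdiag (Pi.single i 1)) A
    simp only [hΦdef, Pi.zero_apply] at this
    rw [single_eval i i] at this
    exact this
  have hq := congrFun (hdiag (fun t => (Pi.single α 1 : Fin n → ℂ) t
    + (Pi.single μ 1 : Fin n → ℂ) t)) A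
  simp only [hΦdef, Pi.zero_apply] at hq
  have hexp : ∑ a, ∑ b, h A a b * ((Pi.single α 1 : Fin n → ℂ) a + (Pi.single μ 1 : Fin n → ℂ) a)
      * ((Pi.single α 1 : Fin n → ℂ) b + (Pi.single μ 1 : Fin n → ℂ) b)
      = h A α α + h A α μ + h A μ α + h A μ μ := by
    calc ∑ a, ∑ b, h A a b * ((Pi.single α 1 : Fin n → ℂ) a + (Pi.single μ 1 : Fin n → ℂ) a)
        * ((Pi.single α 1 : Fin n → ℂ) b + (Pi.single μ 1 : Fin n → ℂ) b)
        = ∑ a, ∑ b, (h A a b * (Pi.single α 1 : Fin n → ℂ) a * (Pi.single α 1 : Fin n → ℂ) b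
          + h A a b * (Pi.single α 1 : Fin n → ℂ) a * (Pi.single μ 1 : Fin n → ℂ) b
          + h A a b * (Pi.single μ 1 : Fin n → ℂ) a * (Pi.single α 1 : Fin n → ℂ) b
          + h A a b * (Pi.single μ 1 : Fin n → ℂ) a * (Pi.single μ 1 : Fin n → ℂ) b) := by
          refine Finset.sum_congr rfl fun a _ => Finset.sum_congr rfl fun b _ => by ring
      _ = h A α α + h A α μ + h A μ α + h A μ μ := by
          simp only [Finset.sum_add_distrib]
          rw [single_eval α α, single_eval α μ, single_eval μ α, single_eval μ μ]
  rw [hexp] at hq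
  rw [hdd α, hdd μ, hsym A μ α] at hq
  linear_combination hq / 2
end
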